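/- arXiv:1402.4736 — 7 statements merged into one kernel-verified Lean document; each statement's English description precedes it below -/
import Mathlib

section
/- Let G be a locally compact, second countable, Hausdorff, amenable topological group and let (X,G) be a topological dynamical system (X a compact metric space with a jointly continuous left G-action) that is uniquely ergodic with invariant Borel probability measure μ. If A ⊆ X is a Borel set with μ(∂A) = 0, x ∈ X, and Φ is any left Reiter sequence in L¹(G,m), then the density with respect to Φ of the return time set { g ∈ G : g·x ∈ A } exists and equals μ(A). -/
open MeasureTheory Filter Topology Set Pointwise

noncomputable section

section Defs

variable {G : Type*}

/-- The left translate of a bounded continuous function: `(lTrans g f) x = f (g⁻¹ * x)`. -/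
def lTrans [Group G] [TopologicalSpace G] [IsTopologicalGroup G] (g : G)
    (f : BoundedContinuousFunction G ℝ) : BoundedContinuousFunction G ℝ :=
  f.compContinuous ⟨fun x => g⁻¹ * x, continuous_mul_left g⁻¹⟩

/-- Amenability of a topological group: existence of a left-invariant mean on the
bounded continuous real-valued functions. -/
def HasLeftInvariantMean (G : Type*) [Group G] [TopologicalSpace G] [IsTopologicalGroup G] :
    Prop :=
  ∃ Λ : BoundedContinuousFunction G ℝ →ₗ[ℝ] ℝ,
    Λ (BoundedContinuousFunction.const G 1) = 1 ∧
    (∀ f, (∀ x, 0 ≤ f x) → 0 ≤ Λ f) ∧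
    (∀ (g : G) (f : BoundedContinuousFunction G ℝ), Λ (lTrans g f) = Λ f)

/-- A bounded continuous real-valued function on a topological group is almost periodic if
its set of left translates is relatively compact in the sup norm. -/
def AlmostPeriodic [Group G] [TopologicalSpace G] [IsTopologicalGroup G]
    (f : BoundedContinuousFunction G ℝ) : Prop :=
  IsCompact (closure (Set.range fun g : G => lTrans g f))

/-- A subset `S` of a topological group is (left) syndetic if `K * S = G` for some compact `K`. -/
def SyndeticSet [Group G] [TopologicalSpace G] (S : Set G) : Prop :=
  ∃ K : Set G, IsCompact K ∧ K * S = Set.univ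

/-- A subset `T` of a topological group is thick if every compact set has a
right translate inside `T`. -/
def ThickSet [Group G] [TopologicalSpace G] (T : Set G) : Prop :=
  ∀ K : Set G, IsCompact K → ∃ g : G, (fun k => k * g) '' K ⊆ T

/-- A subset `P` of a topological group is piecewise syndetic if `K * P` is thick
for some compact `K`. -/
def PiecewiseSyndeticSet [Group G] [TopologicalSpace G] (P : Set G) : Prop :=
  ∃ K : Set G, IsCompact K ∧ ThickSet (K * P)

/-- The increasing product `g k₁ * ⋯ * g k_m` over `α = {k₁ < ⋯ < k_m}`. -/
def incProd [Group G] (g : ℕ → G) (α : Finset ℕ) : G :=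
  ((α.sort (· ≤ ·)).map g).prod

/-- The decreasing product `g k_m * ⋯ * g k₁` over `α = {k₁ < ⋯ < k_m}`. -/
def decProd [Group G] (g : ℕ → G) (α : Finset ℕ) : G :=
  (((α.sort (· ≤ ·)).map g).reverse).prod

/-- The increasing finite products set determined by the sequence `g`. -/
def FPi [Group G] (g : ℕ → G) : Set G :=
  {x | ∃ α : Finset ℕ, α.Nonempty ∧ x = incProd g α}

/-- The two-sided finite products set determined by the sequence `g`. -/
def FP2 [Group G] (g : ℕ → G) : Set G :=
  {x | ∃ α β : Finset ℕ, Disjoint α β ∧ (α ∪ β).Nonempty ∧ x = incProd g α * decProd g β}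

/-- The von Neumann kernel: the intersection of the kernels of all continuous
finite-dimensional unitary representations. -/
def vnKernel (G : Type*) [Group G] [TopologicalSpace G] : Subgroup G :=
  ⨅ (n : ℕ)
    (φ : G →* unitary (EuclideanSpace ℂ (Fin n) →L[ℂ] EuclideanSpace ℂ (Fin n)))
    (_ : Continuous φ), φ.ker

/-- A topological group is WM (minimally almost periodic) if it has no non-trivial
continuous finite-dimensional unitary representations. -/
def IsWM (G : Type*) [Group G] [TopologicalSpace G] : Prop :=
  ∀ (n : ℕ)
    (φ : G →* unitary (EuclideanSpace ℂ (Fin n) →L[ℂ] EuclideanSpace ℂ (Fin n))),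
    Continuous φ → ∀ g : G, φ g = 1

/-- A topological group is WM-by-compact if it has a closed normal WM subgroup that
is cocompact. -/
def WMByCompact (G : Type*) [Group G] [TopologicalSpace G] : Prop :=
  ∃ H : Subgroup G, H.Normal ∧ IsClosed (H : Set G) ∧ IsWM H ∧ CompactSpace (G ⧸ H)

variable [Group G] [TopologicalSpace G] [MeasurableSpace G]

/-- The ratio `m (E ∩ Φ N) / m (Φ N)`. -/
def densFrac (m : Measure G) (Φ : ℕ → Set G) (E : Set G) (N : ℕ) : ℝ :=
  (m (E ∩ Φ N)).toReal / (m (Φ N)).toReal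

/-- A left Følner sequence: compact positive-measure sets with
`m (Φ N ∩ g • Φ N) / m (Φ N) → 1` uniformly on compact sets of `g`. -/
def IsLeftFolner (m : Measure G) (Φ : ℕ → Set G) : Prop :=
  (∀ N, IsCompact (Φ N)) ∧ (∀ N, 0 < m (Φ N)) ∧
    ∀ K : Set G, IsCompact K → ∀ ε : ℝ, 0 < ε → ∃ N₀ : ℕ, ∀ N ≥ N₀, ∀ g ∈ K,
      |(m (Φ N ∩ g • Φ N)).toReal / (m (Φ N)).toReal - 1| < ε

/-- A right Følner sequence: compact positive-measure sets with
`m (Φ N * g ∩ Φ N) / m (Φ N) → 1` uniformly on compact sets of `g`. -/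
def IsRightFolner (m : Measure G) (Φ : ℕ → Set G) : Prop :=
  (∀ N, IsCompact (Φ N)) ∧ (∀ N, 0 < m (Φ N)) ∧
    ∀ K : Set G, IsCompact K → ∀ ε : ℝ, 0 < ε → ∃ N₀ : ℕ, ∀ N ≥ N₀, ∀ g ∈ K,
      |(m ((fun x => x * g) '' Φ N ∩ Φ N)).toReal / (m (Φ N)).toReal - 1| < ε

/-- A two-sided Følner sequence is both a left and a right Følner sequence. -/
def IsTwoSidedFolner (m : Measure G) (Φ : ℕ → Set G) : Prop :=
  IsLeftFolner m Φ ∧ IsRightFolner m Φ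

/-- Upper density of `E` with respect to a Følner sequence `Φ`. -/
def upperDensSet (m : Measure G) (Φ : ℕ → Set G) (E : Set G) : ℝ :=
  Filter.limsup (densFrac m Φ E) Filter.atTop

/-- Lower density of `E` with respect to a Følner sequence `Φ`. -/
def lowerDensSet (m : Measure G) (Φ : ℕ → Set G) (E : Set G) : ℝ :=
  Filter.liminf (densFrac m Φ E) Filter.atTop

/-- `Δ` is the modular function of the left Haar measure `m`: a continuous positive
homomorphism with `map (· * g) m = Δ g • m`. -/
def IsModularFunction (m : Measure G) (Δ : G → ℝ) : Prop :=
  Continuous Δ ∧ (∀ g, 0 < Δ g) ∧ (∀ g h, Δ (g * h) = Δ g * Δ h) ∧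
    ∀ g : G, Measure.map (fun x => x * g) m = ENNReal.ofReal (Δ g) • m

/-- A left Reiter sequence in `L¹(G, m)`. -/
def IsLeftReiter (m : Measure G) (Φ : ℕ → G → ℝ) : Prop :=
  (∀ N x, 0 ≤ Φ N x) ∧ (∀ N, Integrable (Φ N) m) ∧ (∀ N, ∫ x, Φ N x ∂m = 1) ∧
    ∀ g : G, Tendsto (fun N => ∫ x, |Φ N (g⁻¹ * x) - Φ N x| ∂m) atTop (nhds 0)

/-- A two-sided Reiter sequence in `L¹(G, m)`. -/
def IsTwoSidedReiter (m : Measure G) (Φ : ℕ → G → ℝ) : Prop :=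
  IsLeftReiter m Φ ∧
    ∃ Δ : G → ℝ, IsModularFunction m Δ ∧
      ∀ g : G, Tendsto (fun N => ∫ x, |Δ g * Φ N (x * g) - Φ N x| ∂m) atTop (nhds 0)

/-- Upper density of `E` with respect to a Reiter sequence `Φ`. -/
def upperDensReiter (m : Measure G) (Φ : ℕ → G → ℝ) (E : Set G) : ℝ :=
  Filter.limsup (fun N => ∫ x in E, Φ N x ∂m) Filter.atTop

/-- A substantial subset of `G`: one containing `U * W * U` for some open neighbourhood
`U` of the identity and some measurable `W` of positive upper density with respect to
some two-sided Reiter sequence. -/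
def SubstantialSet (m : Measure G) (S : Set G) : Prop :=
  ∃ U W : Set G, IsOpen U ∧ (1 : G) ∈ U ∧ MeasurableSet W ∧
    (∃ Φ : ℕ → G → ℝ, IsTwoSidedReiter m Φ ∧ 0 < upperDensReiter m Φ W) ∧
    U * W * U ⊆ S

/-- Two-sided upper Banach density. -/
def upperBanachDens (m : Measure G) (E : Set G) : ℝ :=
  sSup {d : ℝ | ∃ Φ : ℕ → G → ℝ, IsTwoSidedReiter m Φ ∧ d = upperDensReiter m Φ E}

/-- A set of measurable recurrence in a topological group. -/
def IsRecurrenceSet (R : Set G) : Prop :=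
  ∀ K : Set G, IsCompact K →
    ∀ (X : Type) [MeasurableSpace X] [MeasurableSpace.CountablyGenerated X]
      (μ : Measure X) [IsProbabilityMeasure μ] (T : G → X → X),
      Measurable (fun p : G × X => T p.1 p.2) →
      (∀ g : G, MeasurePreserving (T g) μ μ) →
      (∀ g h : G, ∀ x : X, T g (T h x) = T (g * h) x) →
      (∀ x : X, T 1 x = x) →
      ∀ A : Set X, MeasurableSet A → 0 < μ A →
        ∃ g ∈ R \ K, 0 < μ (A ∩ T g ⁻¹' A)

end Defs


open scoped NNReal ENNReal

/-- Every bounded real sequence has a limit along any ultrafilter. -/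
lemma ultralim_exists (U : Ultrafilter ℕ) {d : ℕ → ℝ} {b₁ b₂ : ℝ} (h : ∀ n, d n ∈ Set.Icc b₁ b₂) :
    ∃ c ∈ Set.Icc b₁ b₂, Tendsto d (U : Filter ℕ) (nhds c) := by
  obtain ⟨c, hc, hle⟩ := isCompact_Icc.ultrafilter_le_nhds (U.map d) (by
    rw [Ultrafilter.coe_map, le_principal_iff]
    exact Filter.mem_map.2 (Filter.univ_mem' h))
  exact ⟨c, hc, by rwa [Ultrafilter.coe_map] at hle⟩

/-- View a compactly supported continuous map as a bounded continuous function. -/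
def ccToB {X : Type*} [TopologicalSpace X] [CompactSpace X]
    (f : CompactlySupportedContinuousMap X ℝ≥0) : BoundedContinuousFunction X ℝ≥0 :=
  BoundedContinuousFunction.mkOfCompact f.toContinuousMap

/-- If `(X, G)` is a uniquely ergodic topological dynamical system with
invariant Borel probability measure `μ`, `A` a Borel set with `μ(∂A) = 0`, `x ∈ X`,
and `Φ` a left Reiter sequence, then the density of the return time set
`{g : g • x ∈ A}` with respect to `Φ` exists and equals `μ A`. -/
theorem statement10 {G : Type} [Group G] [TopologicalSpace G] [IsTopologicalGroup G]
    [LocallyCompactSpace G] [SecondCountableTopology G] [T2Space G]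
    [MeasurableSpace G] [BorelSpace G]
    (m : Measure G) [m.IsHaarMeasure]
    (hAmen : HasLeftInvariantMean G)
    {X : Type} [MetricSpace X] [CompactSpace X] [MeasurableSpace X] [BorelSpace X]
    (a : G → X → X) (hcont : Continuous fun p : G × X => a p.1 p.2)
    (hone : ∀ x : X, a 1 x = x) (hmul : ∀ g h : G, ∀ x : X, a g (a h x) = a (g * h) x)
    (μ : Measure X) [IsProbabilityMeasure μ]
    (hinv : ∀ g : G, MeasurePreserving (a g) μ μ)
    (huniq : ∀ ν : Measure X, IsProbabilityMeasure ν →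
      (∀ g : G, MeasurePreserving (a g) ν ν) → ν = μ)
    (A : Set X) (hA : MeasurableSet A) (hbd : μ (frontier A) = 0)
    (x : X) (Φ : ℕ → G → ℝ) (hΦ : IsLeftReiter m Φ) :
    Tendsto (fun N => ∫ g in {g : G | a g x ∈ A}, Φ N g ∂m) atTop
      (nhds (μ A).toReal) := by
  obtain ⟨hΦpos, hΦint, hΦone, hΦreit⟩ := hΦ
  -- basic continuity facts
  have hax : ∀ h : G, Continuous (a h) := fun h =>
    hcont.comp (continuous_const.prodMk continuous_id)
  have horb : Continuous fun g : G => a g x :=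
    hcont.comp (continuous_id.prodMk continuous_const)
  set E : Set G := {g : G | a g x ∈ A} with hE
  have hEmeas : MeasurableSet E := horb.measurable hA
  set d : ℕ → ℝ := fun N => ∫ g in E, Φ N g ∂m with hd
  have hd01 : ∀ N, d N ∈ Set.Icc (0 : ℝ) 1 := by
    intro N
    constructor
    · exact setIntegral_nonneg hEmeas fun g _ => hΦpos N g
    · calc ∫ g in E, Φ N g ∂m ≤ ∫ g, Φ N g ∂m :=
            setIntegral_le_integral (hΦint N) (Filter.Eventually.of_forall (hΦpos N))
        _ = 1 := hΦone N
  rw [tendsto_iff_ultrafilter]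
  intro U hU
  obtain ⟨c, hc01, hcU⟩ := ultralim_exists U hd01
  -- the integral functional
  set I : ℕ → (BoundedContinuousFunction X ℝ≥0) → ℝ :=
    fun N f => ∫ g, (f (a g x) : ℝ) * Φ N g ∂m with hI
  have hbded : ∀ f : BoundedContinuousFunction X ℝ≥0, ∃ C : ℝ≥0, ∀ y, f y ≤ C := by
    intro f
    obtain ⟨C, hC⟩ := (isCompact_range f.continuous).bddAbove
    exact ⟨C, fun y => hC ⟨y, rfl⟩⟩
  have hcontf : ∀ f : BoundedContinuousFunction X ℝ≥0,
      Continuous fun g : G => (f (a g x) : ℝ) :=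
    fun f => NNReal.continuous_coe.comp (f.continuous.comp horb)
  have hInt : ∀ N (f : BoundedContinuousFunction X ℝ≥0),
      Integrable (fun g => (f (a g x) : ℝ) * Φ N g) m := by
    intro N f
    obtain ⟨C, hC⟩ := hbded f
    refine (hΦint N).bdd_mul (hcontf f).aestronglyMeasurable (c := C) (Filter.Eventually.of_forall fun g => ?_)
    rw [NNReal.norm_eq]
    exact_mod_cast hC (a g x)
  have hImono : ∀ N (f₁ f₂ : BoundedContinuousFunction X ℝ≥0), (∀ y, f₁ y ≤ f₂ y) →
      I N f₁ ≤ I N f₂ := by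
    intro N f₁ f₂ hle
    refine integral_mono (hInt N f₁) (hInt N f₂) fun g => ?_
    exact mul_le_mul_of_nonneg_right (by exact_mod_cast hle (a g x)) (hΦpos N g)
  -- limits along the ultrafilter
  have hLex : ∀ f : BoundedContinuousFunction X ℝ≥0,
      ∃ l : ℝ, 0 ≤ l ∧ Tendsto (fun N => I N f) (U : Filter ℕ) (nhds l) := by
    intro f
    obtain ⟨C, hC⟩ := hbded f
    have hIb : ∀ N, I N f ∈ Set.Icc (0 : ℝ) C := by
      intro N
      constructor
      · exact integral_nonneg fun g => mul_nonneg (f (a g x)).coe_nonneg (hΦpos N g)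
      · calc I N f ≤ ∫ g, (C : ℝ) * Φ N g ∂m := by
              refine integral_mono (hInt N f) ((hΦint N).const_mul _) fun g => ?_
              exact mul_le_mul_of_nonneg_right (by exact_mod_cast hC (a g x)) (hΦpos N g)
          _ = (C : ℝ) * ∫ g, Φ N g ∂m := integral_const_mul _ _
          _ = C := by rw [hΦone N, mul_one]
    obtain ⟨l, hl, hlt⟩ := ultralim_exists U hIb
    exact ⟨l, hl.1, hlt⟩
  choose L hL0 hLU using hLex
  have hLmono : ∀ f₁ f₂ : BoundedContinuousFunction X ℝ≥0, (∀ y, f₁ y ≤ f₂ y) →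
      L f₁ ≤ L f₂ := fun f₁ f₂ hle =>
    le_of_tendsto_of_tendsto' (hLU f₁) (hLU f₂) fun N => hImono N f₁ f₂ hle
  -- linearity
  have hIadd : ∀ N (f₁ f₂ : BoundedContinuousFunction X ℝ≥0),
      I N (f₁ + f₂) = I N f₁ + I N f₂ := by
    intro N f₁ f₂
    have : (fun g => ((f₁ + f₂) (a g x) : ℝ) * Φ N g) =
        fun g => (f₁ (a g x) : ℝ) * Φ N g + (f₂ (a g x) : ℝ) * Φ N g := by
      funext g
      simp only [BoundedContinuousFunction.add_apply, NNReal.coe_add]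
      ring
    simp only [hI, this]
    exact integral_add (hInt N f₁) (hInt N f₂)
  have hLadd : ∀ f₁ f₂ : BoundedContinuousFunction X ℝ≥0,
      L (f₁ + f₂) = L f₁ + L f₂ := by
    intro f₁ f₂
    refine tendsto_nhds_unique (hLU (f₁ + f₂)) ?_
    have := (hLU f₁).add (hLU f₂)
    simpa only [← hIadd] using this
  have hLsmul : ∀ (r : ℝ≥0) (f : BoundedContinuousFunction X ℝ≥0),
      L (r • f) = (r : ℝ) * L f := by
    intro r f
    refine tendsto_nhds_unique (hLU (r • f)) ?_
    have h1 : ∀ N, I N (r • f) = (r : ℝ) * I N f := by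
      intro N
      simp only [hI]
      rw [← integral_const_mul]
      congr 1
      funext g
      simp only [BoundedContinuousFunction.coe_smul, Pi.smul_apply, smul_eq_mul,
        NNReal.coe_mul]
      ring
    simp only [h1]
    exact (hLU f).const_mul _
  have hLone : L 1 = 1 := by
    refine tendsto_nhds_unique (hLU 1) ?_
    have h1 : ∀ N, I N 1 = 1 := by
      intro N
      simp only [hI, BoundedContinuousFunction.coe_one, Pi.one_apply, NNReal.coe_one,
        one_mul]
      exact hΦone N
    simp only [h1]
    exact tendsto_const_nhds
  -- invariance of L
  have hLinv : ∀ (h : G) (f : BoundedContinuousFunction X ℝ≥0),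
      L (f.compContinuous ⟨a h, hax h⟩) = L f := by
    intro h f
    obtain ⟨C, hC⟩ := hbded f
    have hdiff : Tendsto (fun N => I N (f.compContinuous ⟨a h, hax h⟩) - I N f)
        atTop (nhds 0) := by
      have hcomp : ∀ N, Integrable (fun g => Φ N (h⁻¹ * g)) m := by
        intro N
        exact ((measurePreserving_mul_left m h⁻¹).integrable_comp
          (hΦint N).aestronglyMeasurable).2 (hΦint N)
      have hint2 : ∀ N, Integrable (fun g => (f (a g x) : ℝ) * Φ N (h⁻¹ * g)) m := by
        intro N
        refine (hcomp N).bdd_mul (hcontf f).aestronglyMeasurable (c := C) (Filter.Eventually.of_forall fun g => ?_)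
        rw [NNReal.norm_eq]
        exact_mod_cast hC (a g x)
      have hrew : ∀ N, I N (f.compContinuous ⟨a h, hax h⟩) =
          ∫ g, (f (a g x) : ℝ) * Φ N (h⁻¹ * g) ∂m := by
        intro N
        rw [← integral_mul_left_eq_self (fun u => (f (a u x) : ℝ) * Φ N (h⁻¹ * u)) h]
        simp only [hI]
        congr 1
        funext g
        rw [inv_mul_cancel_left]
        congr 2
        simp only [BoundedContinuousFunction.compContinuous_apply, ContinuousMap.coe_mk]
        rw [hmul]
      have hsub : ∀ N, I N (f.compContinuous ⟨a h, hax h⟩) - I N f =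
          ∫ g, (f (a g x) : ℝ) * (Φ N (h⁻¹ * g) - Φ N g) ∂m := by
        intro N
        rw [hrew N]
        simp only [hI]
        rw [← integral_sub (hint2 N) (hInt N f)]
        congr 1
        funext g
        ring
      have hbound : ∀ N, |I N (f.compContinuous ⟨a h, hax h⟩) - I N f| ≤
          (C : ℝ) * ∫ g, |Φ N (h⁻¹ * g) - Φ N g| ∂m := by
        intro N
        rw [hsub N]
        calc |∫ g, (f (a g x) : ℝ) * (Φ N (h⁻¹ * g) - Φ N g) ∂m|
            ≤ ∫ g, |(f (a g x) : ℝ) * (Φ N (h⁻¹ * g) - Φ N g)| ∂m := by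
              have h0 := norm_integral_le_integral_norm
                (μ := m) (fun g => (f (a g x) : ℝ) * (Φ N (h⁻¹ * g) - Φ N g))
              simp only [Real.norm_eq_abs] at h0
              exact h0
          _ ≤ ∫ g, (C : ℝ) * |Φ N (h⁻¹ * g) - Φ N g| ∂m := by
              refine integral_mono_of_nonneg
                (Filter.Eventually.of_forall fun g => abs_nonneg _)
                (((hcomp N).sub (hΦint N)).abs.const_mul _)
                (Filter.Eventually.of_forall fun g => ?_)
              show |(f (a g x) : ℝ) * (Φ N (h⁻¹ * g) - Φ N g)| ≤
                (C : ℝ) * |Φ N (h⁻¹ * g) - Φ N g|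
              rw [abs_mul]
              refine mul_le_mul_of_nonneg_right ?_ (abs_nonneg _)
              rw [abs_of_nonneg (f (a g x)).coe_nonneg]
              exact_mod_cast hC (a g x)
          _ = (C : ℝ) * ∫ g, |Φ N (h⁻¹ * g) - Φ N g| ∂m := integral_const_mul _ _
      refine squeeze_zero_norm
        (a := fun N => (C : ℝ) * ∫ g, |Φ N (h⁻¹ * g) - Φ N g| ∂m)
        (fun N => hbound N) ?_
      have := (hΦreit h).const_mul (C : ℝ)
      simpa using this
    have h2 : Tendsto (fun N => I N (f.compContinuous ⟨a h, hax h⟩) - I N f)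
        (U : Filter ℕ) (nhds 0) := hdiff.mono_left hU
    have h3 : Tendsto (fun N => I N (f.compContinuous ⟨a h, hax h⟩) - I N f)
        (U : Filter ℕ) (nhds (L (f.compContinuous ⟨a h, hax h⟩) - L f)) :=
      (hLU _).sub (hLU f)
    have := tendsto_nhds_unique h3 h2
    linarith
  -- the linear functional
  set Λ : CompactlySupportedContinuousMap X ℝ≥0 →ₗ[ℝ≥0] ℝ≥0 :=
    { toFun := fun f => (L (ccToB f)).toNNReal
      map_add' := fun f₁ f₂ => by
        show (L (ccToB (f₁ + f₂))).toNNReal = (L (ccToB f₁)).toNNReal + (L (ccToB f₂)).toNNReal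
        rw [show ccToB (f₁ + f₂) = ccToB f₁ + ccToB f₂ from
          BoundedContinuousFunction.ext fun _ => rfl, hLadd]
        exact Real.toNNReal_add (hL0 f₁) (hL0 f₂)
      map_smul' := fun r f => by
        show (L (ccToB (r • f))).toNNReal = r • (L (ccToB f)).toNNReal
        rw [show ccToB (r • f) = r • ccToB f from BoundedContinuousFunction.ext fun _ => rfl,
          hLsmul, Real.toNNReal_mul r.coe_nonneg, Real.toNNReal_coe, smul_eq_mul] } with hΛ
  have hΛreal : ∀ f, (Λ f : ℝ) = L (ccToB f) := fun f => Real.coe_toNNReal _ (hL0 _)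
  have hΛapp : ∀ f, Λ f = (L (ccToB f)).toNNReal := fun _ => rfl
  -- the content
  have hsupdisj : ∀ K₁ K₂ : TopologicalSpace.Compacts X, Disjoint (K₁ : Set X) K₂ →
      rieszContentAux Λ (K₁ ⊔ K₂) = rieszContentAux Λ K₁ + rieszContentAux Λ K₂ := by
    intro K₁ K₂ hdisj
    refine le_antisymm (rieszContentAux_sup_le Λ K₁ K₂) ?_
    refine le_csInf (rieszContentAux_image_nonempty Λ (K₁ ⊔ K₂)) ?_
    rintro b ⟨f, hf, rfl⟩
    obtain ⟨φ, hφ0, hφ1, hφ01⟩ := exists_continuous_zero_one_of_isClosed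
      K₂.isCompact.isClosed K₁.isCompact.isClosed hdisj.symm
    set t : X → ℝ≥0 := fun y => Real.toNNReal (φ y) with ht
    have htc : Continuous t := continuous_real_toNNReal.comp φ.continuous
    have ht1 : ∀ y, t y ≤ 1 := fun y => by
      rw [ht]
      exact Real.toNNReal_le_one.2 (hφ01 y).2
    set g₁ : CompactlySupportedContinuousMap X ℝ≥0 :=
      CompactlySupportedContinuousMap.continuousMapEquiv
        ⟨fun y => f y * t y, (map_continuous f).mul htc⟩
    set g₂ : CompactlySupportedContinuousMap X ℝ≥0 :=
      CompactlySupportedContinuousMap.continuousMapEquiv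
        ⟨fun y => f y * (1 - t y), (map_continuous f).mul
        (continuous_const.sub htc)⟩
    have hgsum : g₁ + g₂ = f := by
      ext y
      have h1 : g₁ y = f y * t y := rfl
      have h2 : g₂ y = f y * (1 - t y) := rfl
      have key : g₁ y + g₂ y = f y := by
        rw [h1, h2, ← mul_add, add_tsub_cancel_of_le (ht1 y), mul_one]
      rw [CompactlySupportedContinuousMap.add_apply]
      exact_mod_cast key
    have hg₁ : ∀ y ∈ K₁, 1 ≤ g₁ y := by
      intro y hy
      show 1 ≤ f y * t y
      have h1 : t y = 1 := by
        rw [ht]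
        simp [hφ1 hy]
      rw [h1, mul_one]
      exact hf y (Or.inl hy)
    have hg₂ : ∀ y ∈ K₂, 1 ≤ g₂ y := by
      intro y hy
      show 1 ≤ f y * (1 - t y)
      have h0 : t y = 0 := by
        rw [ht]
        simp [hφ0 hy]
      rw [h0, tsub_zero, mul_one]
      exact hf y (Or.inr hy)
    calc rieszContentAux Λ K₁ + rieszContentAux Λ K₂ ≤ Λ g₁ + Λ g₂ :=
          add_le_add (rieszContentAux_le Λ hg₁) (rieszContentAux_le Λ hg₂)
      _ = Λ (g₁ + g₂) := (map_add Λ g₁ g₂).symm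
      _ = Λ f := by rw [hgsum]
  set μC : MeasureTheory.Content X :=
    { toFun := rieszContentAux Λ
      mono' := fun K₁ K₂ h => rieszContentAux_mono Λ h
      sup_disjoint' := fun K₁ K₂ hd _ _ => hsupdisj K₁ K₂ hd
      sup_le' := rieszContentAux_sup_le Λ } with hμC
  -- content regularity
  have hreg : MeasureTheory.Content.ContentRegular μC := by
    intro K
    refine le_antisymm (le_iInf fun K' => le_iInf fun hK' =>
      μC.mono _ _ (hK'.trans interior_subset)) ?_
    refine ENNReal.le_of_forall_pos_le_add fun ε hε _ => ?_
    obtain ⟨f, hf, hΛf⟩ := exists_lt_rieszContentAux_add_pos Λ K (half_pos hε)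
    set q : ℝ≥0 := rieszContentAux Λ K with hq
    set t : ℝ≥0 := (q + ε / 2) / (q + ε) with htdef
    have hqε : (0 : ℝ≥0) < q + ε := lt_of_lt_of_le hε le_add_self
    have hqε2 : (0 : ℝ≥0) < q + ε / 2 := lt_of_lt_of_le (half_pos hε) le_add_self
    have ht0 : 0 < t := div_pos hqε2 hqε
    have ht1 : t < 1 := by
      rw [htdef, div_lt_one hqε]
      exact add_lt_add_right (half_lt_self hε) q
    have hfc : Continuous fun y => f y := f.continuous
    set K' : TopologicalSpace.Compacts X :=
      ⟨{y : X | t ≤ f y}, (isClosed_le continuous_const hfc).isCompact⟩ with hK'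
    have hKK' : (K : Set X) ⊆ interior (K' : Set X) := by
      have hopen : IsOpen {y : X | t < f y} := isOpen_lt continuous_const hfc
      have hsub2 : {y : X | t < f y} ⊆ (K' : Set X) := fun y hy =>
        show t ≤ f y from le_of_lt hy
      refine subset_trans (fun y hy => ?_) (interior_maximal hsub2 hopen)
      exact lt_of_lt_of_le ht1 (hf y hy)
    have hfK' : ∀ y ∈ K', 1 ≤ (t⁻¹ • f) y := by
      intro y hy
      show (1 : ℝ≥0) ≤ t⁻¹ * f y
      rw [← inv_mul_cancel₀ (ne_of_gt ht0)]
      exact mul_le_mul_of_nonneg_left hy zero_le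
    have step : rieszContentAux Λ K' ≤ t⁻¹ * Λ f := by
      have := rieszContentAux_le Λ hfK'
      rwa [_root_.map_smul, smul_eq_mul] at this
    have step2 : t⁻¹ * Λ f ≤ t⁻¹ * (q + ε / 2) := by
      exact mul_le_mul_of_nonneg_left (le_of_lt hΛf) zero_le
    have step3 : t⁻¹ * (q + ε / 2) = q + ε := by
      rw [htdef, inv_div, div_mul_cancel₀ _ (ne_of_gt hqε2)]
    have : rieszContentAux Λ K' ≤ q + ε := by
      calc rieszContentAux Λ K' ≤ t⁻¹ * Λ f := step
        _ ≤ t⁻¹ * (q + ε / 2) := step2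
        _ = q + ε := step3
    calc (⨅ (K'' : TopologicalSpace.Compacts X) (_ : (K : Set X) ⊆ interior (K'' : Set X)),
          (μC K'' : ℝ≥0∞)) ≤ μC K' := biInf_le _ hKK'
      _ ≤ ((q + ε : ℝ≥0) : ℝ≥0∞) := ENNReal.coe_le_coe.2 this
      _ = μC K + ε := by rw [ENNReal.coe_add]; rfl
  set ν : Measure X := μC.measure with hν
  have hνK : ∀ K : TopologicalSpace.Compacts X, ν (K : Set X) = (rieszContentAux Λ K : ℝ≥0∞) :=
    fun K => MeasureTheory.Content.measure_eq_content_of_regular μC hreg K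
  -- ν is a probability measure
  have hΛ1 : Λ (CompactlySupportedContinuousMap.continuousMapEquiv 1) = 1 := by
    rw [hΛapp, show ccToB (CompactlySupportedContinuousMap.continuousMapEquiv 1) = 1 from
      BoundedContinuousFunction.ext fun _ => rfl, hLone]
    exact Real.toNNReal_one
  have hunivC : rieszContentAux Λ ⟨Set.univ, isCompact_univ⟩ = 1 := by
    refine le_antisymm ?_ ?_
    · have := rieszContentAux_le Λ (K := ⟨Set.univ, isCompact_univ⟩)
        (f := CompactlySupportedContinuousMap.continuousMapEquiv 1) (fun y _ => le_refl _)
      rwa [hΛ1] at this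
    · refine le_csInf (rieszContentAux_image_nonempty Λ _) ?_
      rintro b ⟨f, hf, rfl⟩
      rw [← hΛ1]
      have : ∀ y, ccToB (CompactlySupportedContinuousMap.continuousMapEquiv 1) y ≤ ccToB f y :=
        fun y =>
        hf y (Set.mem_univ y)
      rw [hΛapp, hΛapp]
      exact Real.toNNReal_mono (hLmono _ _ this)
  have hνuniv : ν Set.univ = 1 := by
    rw [hν, μC.measure_apply MeasurableSet.univ,
      μC.outerMeasure_of_isOpen Set.univ isOpen_univ]
    have := μC.innerContent_of_isCompact (K := (Set.univ : Set X)) isCompact_univ isOpen_univ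
    rw [this]
    show ((rieszContentAux Λ ⟨Set.univ, isCompact_univ⟩ : ℝ≥0) : ℝ≥0∞) = 1
    rw [hunivC]
    rfl
  have hνprob : IsProbabilityMeasure ν := ⟨hνuniv⟩
  -- invariance of ν
  have hmapK : ∀ (h : G) (K : TopologicalSpace.Compacts X),
      rieszContentAux Λ (K.map (a h) (hax h)) ≤ rieszContentAux Λ K := by
    intro h K
    refine le_csInf (rieszContentAux_image_nonempty Λ K) ?_
    rintro b ⟨f, hf, rfl⟩
    set f' : CompactlySupportedContinuousMap X ℝ≥0 :=
      CompactlySupportedContinuousMap.continuousMapEquiv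
        ((f : C(X, ℝ≥0)).comp ⟨a h⁻¹, hax h⁻¹⟩) with hf'
    have hf'K : ∀ y ∈ K.map (a h) (hax h), 1 ≤ f' y := by
      rintro y ⟨z, hz, rfl⟩
      show (1 : ℝ≥0) ≤ f (a h⁻¹ (a h z))
      rw [hmul, inv_mul_cancel, hone]
      exact hf z hz
    calc rieszContentAux Λ (K.map (a h) (hax h)) ≤ Λ f' := rieszContentAux_le Λ hf'K
      _ = Λ f := by
          rw [hΛapp, hΛapp]
          exact congrArg Real.toNNReal (hLinv h⁻¹ (ccToB f))
  have hmapKeq : ∀ (h : G) (K : TopologicalSpace.Compacts X),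
      rieszContentAux Λ (K.map (a h) (hax h)) = rieszContentAux Λ K := by
    intro h K
    refine le_antisymm (hmapK h K) ?_
    have hKK : (K.map (a h) (hax h)).map (a h⁻¹) (hax h⁻¹) = K := by
      ext y
      simp only [TopologicalSpace.Compacts.coe_map, Set.mem_image, ← Set.image_comp]
      constructor
      · rintro ⟨z, hz, rfl⟩
        show a h⁻¹ (a h z) ∈ _
        rwa [hmul, inv_mul_cancel, hone]
      · intro hy
        refine ⟨y, hy, ?_⟩
        show a h⁻¹ (a h y) = y
        rw [hmul, inv_mul_cancel, hone]
    conv_lhs => rw [← hKK]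
    exact hmapK h⁻¹ (K.map (a h) (hax h))
  have hMP : ∀ h : G, MeasurePreserving (a h) ν ν := by
    intro h
    set φh : X ≃ₜ X :=
      { toFun := a h
        invFun := a h⁻¹
        left_inv := fun y => by rw [hmul, inv_mul_cancel, hone]
        right_inv := fun y => by rw [hmul, mul_inv_cancel, hone]
        continuous_toFun := hax h
        continuous_invFun := hax h⁻¹ } with hφh
    refine ⟨(hax h).measurable, ?_⟩
    refine Measure.ext fun s hs => ?_
    rw [Measure.map_apply (hax h).measurable hs]
    rw [hν, μC.measure_apply ((hax h).measurable hs), μC.measure_apply hs]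
    have : a h ⁻¹' s = (φh : X → X) ⁻¹' s := rfl
    rw [this]
    refine μC.outerMeasure_preimage φh (fun K => ?_) s
    show ((rieszContentAux Λ (TopologicalSpace.Compacts.map (⇑φh) φh.continuous K) : ℝ≥0) :
        ℝ≥0∞) = ((rieszContentAux Λ K : ℝ≥0) : ℝ≥0∞)
    rw [show TopologicalSpace.Compacts.map (⇑φh) φh.continuous K = K.map (a h) (hax h)
      from rfl, hmapKeq h K]
  have hνμ : ν = μ := huniq ν hνprob hMP
  -- measure of closure and interior
  have hclA : μ (closure A) = μ A := by
    refine le_antisymm ?_ (measure_mono subset_closure)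
    calc μ (closure A) ≤ μ (A ∪ frontier A) := by
          refine measure_mono ?_
          rw [closure_eq_interior_union_frontier]
          exact Set.union_subset_union_left _ interior_subset
      _ ≤ μ A + μ (frontier A) := measure_union_le _ _
      _ = μ A := by rw [hbd, add_zero]
  have hintA : μ (interior A) = μ A := by
    refine le_antisymm (measure_mono interior_subset) ?_
    calc μ A ≤ μ (interior A ∪ frontier A) := by
          refine measure_mono ?_
          rw [← closure_eq_interior_union_frontier]
          exact subset_closure
      _ ≤ μ (interior A) + μ (frontier A) := measure_union_le _ _
      _ = μ (interior A) := by rw [hbd, add_zero]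
  -- upper bound : c ≤ (μ A).toReal
  have hCcl : IsCompact (closure A) := isClosed_closure.isCompact
  have hup : c ≤ (μ A).toReal := by
    have key : ∀ f : BoundedContinuousFunction X ℝ≥0, (∀ y ∈ closure A, 1 ≤ f y) →
        c ≤ L f := by
      intro f hf
      refine le_of_tendsto_of_tendsto' hcU (hLU f) fun N => ?_
      have hdN : d N = ∫ g, E.indicator (Φ N) g ∂m := (integral_indicator hEmeas).symm
      rw [hdN]
      refine integral_mono ((hΦint N).indicator hEmeas) (hInt N f) fun g => ?_
      by_cases hg : g ∈ E
      · rw [Set.indicator_of_mem hg]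
        have h1 : (1 : ℝ) ≤ (f (a g x) : ℝ) := by
          exact_mod_cast hf (a g x) (subset_closure hg)
        exact le_mul_of_one_le_left (hΦpos N g) h1
      · rw [Set.indicator_of_notMem hg]
        exact mul_nonneg (f (a g x)).coe_nonneg (hΦpos N g)
    have h1 : Real.toNNReal c ≤ rieszContentAux Λ ⟨closure A, hCcl⟩ := by
      refine le_csInf (rieszContentAux_image_nonempty Λ _) ?_
      rintro b ⟨f, hf, rfl⟩
      rw [hΛapp]
      exact Real.toNNReal_mono (key (ccToB f) hf)
    calc c = ((Real.toNNReal c : ℝ≥0) : ℝ) := (Real.coe_toNNReal c hc01.1).symm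
      _ ≤ ((rieszContentAux Λ ⟨closure A, hCcl⟩ : ℝ≥0) : ℝ) := by exact_mod_cast h1
      _ = (ν (closure A)).toReal := by
          have h := hνK ⟨closure A, hCcl⟩
          rw [show ((⟨closure A, hCcl⟩ : TopologicalSpace.Compacts X) : Set X) = closure A
            from rfl] at h
          rw [h, ENNReal.coe_toReal]
      _ = (μ A).toReal := by rw [hνμ, hclA]
  -- lower bound : (μ A).toReal ≤ c
  have hlow : (μ A).toReal ≤ c := by
    have hsup : ν (interior A) ≤ ENNReal.ofReal c := by
      rw [hν, μC.measure_apply isOpen_interior.measurableSet,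
        μC.outerMeasure_of_isOpen _ isOpen_interior]
      refine iSup₂_le fun K hK => ?_
      obtain ⟨φ, hφ0, hφ1, hφ01⟩ := exists_continuous_zero_one_of_isClosed
        isOpen_interior.isClosed_compl K.isCompact.isClosed
        (Set.disjoint_left.2 fun y hy hyK => hy (hK hyK))
      set fφ : CompactlySupportedContinuousMap X ℝ≥0 :=
        CompactlySupportedContinuousMap.continuousMapEquiv
          ⟨fun y => Real.toNNReal (φ y), continuous_real_toNNReal.comp φ.continuous⟩ with hfφ
      have hfK : ∀ y ∈ K, 1 ≤ fφ y := by
        intro y hy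
        show (1 : ℝ≥0) ≤ Real.toNNReal (φ y)
        simp [hφ1 hy]
      have hIle : ∀ N, I N (ccToB fφ) ≤ d N := by
        intro N
        have hdN : d N = ∫ g, E.indicator (Φ N) g ∂m := (integral_indicator hEmeas).symm
        rw [hdN]
        refine integral_mono (hInt N (ccToB fφ)) ((hΦint N).indicator hEmeas) fun g => ?_
        by_cases hg : g ∈ E
        · rw [Set.indicator_of_mem hg]
          refine mul_le_of_le_one_left (hΦpos N g) ?_
          show ((Real.toNNReal (φ (a g x)) : ℝ≥0) : ℝ) ≤ 1
          rw [Real.coe_toNNReal']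
          exact max_le (hφ01 (a g x)).2 zero_le_one
        · rw [Set.indicator_of_notMem hg]
          have hnot : a g x ∈ (interior A)ᶜ := fun hmem =>
            hg (show a g x ∈ A from interior_subset hmem)
          have : φ (a g x) = 0 := hφ0 hnot
          show ((Real.toNNReal (φ (a g x)) : ℝ≥0) : ℝ) * Φ N g ≤ 0
          rw [this]
          simp
      have hLle : L (ccToB fφ) ≤ c := le_of_tendsto_of_tendsto' (hLU (ccToB fφ)) hcU hIle
      have h2 : rieszContentAux Λ K ≤ Real.toNNReal c := by
        calc rieszContentAux Λ K ≤ Λ fφ := rieszContentAux_le Λ hfK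
          _ = (L (ccToB fφ)).toNNReal := hΛapp fφ
          _ ≤ Real.toNNReal c := Real.toNNReal_mono hLle
      calc ((rieszContentAux Λ K : ℝ≥0) : ℝ≥0∞) ≤ ((Real.toNNReal c : ℝ≥0) : ℝ≥0∞) := by
            exact_mod_cast h2
        _ = ENNReal.ofReal c := rfl
    rw [hνμ, hintA] at hsup
    calc (μ A).toReal ≤ (ENNReal.ofReal c).toReal :=
          ENNReal.toReal_mono ENNReal.ofReal_ne_top hsup
      _ = c := ENNReal.toReal_ofReal hc01.1
  have hceq : c = (μ A).toReal := le_antisymm hup hlow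
  exact hceq ▸ hcU
end
end

section
/- Let G be a countable, infinite discrete group. A subset R of G is a set of measurable recurrence if and only if for every measure-preserving action T of G on a separable probability space (X,𝓑,μ) and every B ∈ 𝓑 with μ(B) > 0 there exists r ∈ R ∖ {id} with μ(B ∩ T^r B) > 0. -/
open MeasureTheory Filter Topology Set Pointwise

noncomputable section

/-- A set of measurable recurrence in a countable discrete group: compact sets are
the finite sets. -/
def DRecurrenceSet {G : Type} [Group G] [MeasurableSpace G] (R : Set G) : Prop :=
  ∀ K : Set G, K.Finite →
    ∀ (X : Type) [MeasurableSpace X] [MeasurableSpace.CountablyGenerated X]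
      (μ : Measure X) [IsProbabilityMeasure μ] (T : G → X → X),
      Measurable (fun p : G × X => T p.1 p.2) →
      (∀ g : G, MeasurePreserving (T g) μ μ) →
      (∀ g h : G, ∀ x : X, T g (T h x) = T (g * h) x) →
      (∀ x : X, T 1 x = x) →
      ∀ A : Set X, MeasurableSet A → 0 < μ A →
        ∃ g ∈ R \ K, 0 < μ (A ∩ T g ⁻¹' A)

namespace Statement12Aux

/-- The two-element group used as the base of the auxiliary Bernoulli-type system. -/
abbrev B2 : Type := Multiplicative (ZMod 2)

instance : TopologicalSpace B2 := ⊥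
instance : DiscreteTopology B2 := ⟨rfl⟩
instance : MeasurableSpace B2 := ⊤
instance : BorelSpace B2 := ⟨borel_eq_top_of_discrete.symm⟩
instance : IsTopologicalGroup B2 where
  continuous_mul := continuous_of_discreteTopology
  continuous_inv := continuous_of_discreteTopology

/-- The compact group `B2 ^ G`. -/
abbrev Om (G : Type) : Type := G → B2

/-- The nontrivial element of `B2`. -/
def x1 : B2 := Multiplicative.ofAdd 1

lemma x1_ne_one : x1 ≠ 1 := by decide

variable {G : Type} [Group G]

/-- The shift action of `G` on `Om G`, as a group automorphism. -/
def sh (g : G) : Om G ≃* Om G where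
  toFun ω := fun x => ω (g⁻¹ * x)
  invFun ω := fun x => ω (g * x)
  left_inv ω := by
    funext x
    show ω (g⁻¹ * (g * x)) = ω x
    rw [← mul_assoc, inv_mul_cancel, one_mul]
  right_inv ω := by
    funext x
    show ω (g * (g⁻¹ * x)) = ω x
    rw [← mul_assoc, mul_inv_cancel, one_mul]
  map_mul' ω₁ ω₂ := rfl

lemma sh_continuous (g : G) : Continuous (sh g) :=
  continuous_pi fun x => continuous_apply (g⁻¹ * x)

lemma sh_symm_continuous (g : G) : Continuous (sh g).symm :=
  continuous_pi fun x => continuous_apply (g * x)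

lemma sh_sh (g h : G) (ω : Om G) : sh g (sh h ω) = sh (g * h) ω := by
  funext x
  show ω (h⁻¹ * (g⁻¹ * x)) = ω ((g * h)⁻¹ * x)
  rw [mul_inv_rev, mul_assoc]

lemma sh_one (ω : Om G) : sh (1 : G) ω = ω := by
  funext x
  show ω ((1 : G)⁻¹ * x) = ω x
  rw [inv_one, one_mul]

/-- The Haar probability measure on `Om G`. -/
def nu (G : Type) [Group G] [Countable G] : Measure (Om G) :=
  Measure.haarMeasure (⊤ : TopologicalSpace.PositiveCompacts (Om G))

variable [Countable G]

instance : (nu G).IsHaarMeasure := by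
  unfold nu; infer_instance

instance : (nu G).Regular := by
  unfold nu; exact Measure.regular_haarMeasure

instance : (nu G).IsMulLeftInvariant := by
  unfold nu; infer_instance

instance : IsProbabilityMeasure (nu G) :=
  ⟨by
    rw [show (Set.univ : Set (Om G)) =
        ((⊤ : TopologicalSpace.PositiveCompacts (Om G)) : Set (Om G)) from
      (TopologicalSpace.PositiveCompacts.coe_top).symm]
    exact Measure.haarMeasure_self⟩

lemma sh_measurePreserving (g : G) : MeasurePreserving (sh g) (nu G) (nu G) := by
  refine ⟨(sh_continuous g).measurable, ?_⟩
  have h1 : Measure.IsHaarMeasure ((nu G).map (sh g)) :=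
    (sh g).isHaarMeasure_map (nu G) (sh_continuous g) (sh_symm_continuous g)
  have h2 : IsProbabilityMeasure ((nu G).map (sh g)) :=
    Measure.isProbabilityMeasure_map (sh_continuous g).measurable.aemeasurable
  exact Measure.isHaarMeasure_eq_of_isProbabilityMeasure _ _

/-- The auxiliary cylinder set determined by a finite set `K`. -/
def cyl (K : Set G) : Set (Om G) :=
  ((fun ω : Om G => ω 1) ⁻¹' {1}) ∩ ⋂ k ∈ {k ∈ K | k ≠ 1}, (fun ω : Om G => ω k) ⁻¹' {x1}

lemma cyl_isOpen {K : Set G} (hK : K.Finite) : IsOpen (cyl K) := by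
  refine IsOpen.inter ?_ ?_
  · exact (isOpen_discrete ({1} : Set B2)).preimage (continuous_apply (1 : G))
  · exact (hK.sep _).isOpen_biInter fun k _ =>
      (isOpen_discrete ({x1} : Set B2)).preimage (continuous_apply k)

open Classical in
lemma cyl_nonempty (K : Set G) : (cyl K).Nonempty := by
  refine ⟨fun h => if h = 1 then 1 else x1, ?_, ?_⟩
  · simp [Set.mem_preimage]
  · simp only [Set.mem_iInter, Set.mem_preimage, Set.mem_sep_iff, Set.mem_singleton_iff]
    rintro k ⟨-, hk1⟩
    simp [hk1]

lemma cyl_measure_pos {K : Set G} (hK : K.Finite) : 0 < nu G (cyl K) :=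
  (cyl_isOpen hK).measure_pos (nu G) (cyl_nonempty K)

lemma cyl_inter_preimage {K : Set G} {k : G} (hk : k ∈ K) (hk1 : k ≠ 1) :
    cyl K ∩ (sh k) ⁻¹' (cyl K) = ∅ := by
  ext ω
  simp only [Set.mem_inter_iff, Set.mem_empty_iff_false, iff_false]
  rintro ⟨⟨h1', -⟩, -, h2⟩
  have h1 : ω 1 = 1 := h1'
  have h3 : sh k ω ∈ ⋂ k' ∈ {k' ∈ K | k' ≠ 1}, (fun ω : Om G => ω k') ⁻¹' {x1} := h2
  rw [Set.mem_iInter₂] at h3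
  have h4 : (sh k ω) k = x1 := h3 k ⟨hk, hk1⟩
  have h5 : ω (k⁻¹ * k) = x1 := h4
  rw [inv_mul_cancel] at h5
  exact x1_ne_one (h5.symm.trans h1)

end Statement12Aux

/-- In a countable, infinite, discrete group, a set `R` is a set of
measurable recurrence if and only if for every measure-preserving action on a separable
probability space and every positive-measure set `B` there is `r ∈ R ∖ {1}` with
`μ (B ∩ T r ⁻¹' B) > 0`. -/
theorem statement12 {G : Type} [Group G] [Countable G] [Infinite G]
    [MeasurableSpace G] [DiscreteMeasurableSpace G] (R : Set G) :
    DRecurrenceSet R ↔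
      ∀ (X : Type) [MeasurableSpace X] [MeasurableSpace.CountablyGenerated X]
        (μ : Measure X) [IsProbabilityMeasure μ] (T : G → X → X),
        Measurable (fun p : G × X => T p.1 p.2) →
        (∀ g : G, MeasurePreserving (T g) μ μ) →
        (∀ g h : G, ∀ x : X, T g (T h x) = T (g * h) x) →
        (∀ x : X, T 1 x = x) →
        ∀ B : Set X, MeasurableSet B → 0 < μ B →
          ∃ r ∈ R \ {(1 : G)}, 0 < μ (B ∩ T r ⁻¹' B) := by
  classical
  constructor
  · intro h X _ _ μ _ T hTm hTp hTmul hT1 B hB hBpos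
    exact h {1} (Set.finite_singleton 1) X μ T hTm hTp hTmul hT1 B hB hBpos
  · intro h K hK X _ _ μ _ T hTm hTp hTmul hT1 A hA hApos
    open Statement12Aux in
    -- Build the product system `X × Om G` with the Bernoulli-type shift on the second factor.
    set ν : Measure (Om G) := nu G with hν
    set C : Set (Om G) := cyl K with hC
    set P : G → X × Om G → X × Om G := fun g p => (T g p.1, sh g p.2) with hP
    have hPm : Measurable fun p : G × (X × Om G) => P p.1 p.2 := by
      have hPm' : Measurable fun q : (X × Om G) × G => P q.2 q.1 := by
        apply measurable_from_prod_countable_left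
        intro g
        exact ((hTp g).measurable.comp measurable_fst).prodMk
          ((sh_continuous g).measurable.comp measurable_snd)
      exact hPm'.comp measurable_swap
    have hPp : ∀ g : G, MeasurePreserving (P g) (μ.prod ν) (μ.prod ν) := fun g =>
      (hTp g).prod (sh_measurePreserving g)
    have hPmul : ∀ g h' : G, ∀ p : X × Om G, P g (P h' p) = P (g * h') p := by
      intro g h' p
      simp only [hP, hTmul, sh_sh]
    have hP1 : ∀ p : X × Om G, P 1 p = p := by
      intro p
      simp only [hP, hT1, sh_one]
    have hCopen : IsOpen C := cyl_isOpen hK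
    have hCpos : 0 < ν C := cyl_measure_pos hK
    have hABmeas : MeasurableSet (A ×ˢ C) := hA.prod hCopen.measurableSet
    have hABpos : 0 < (μ.prod ν) (A ×ˢ C) := by
      rw [Measure.prod_prod]
      exact ENNReal.mul_pos hApos.ne' hCpos.ne'
    obtain ⟨r, hr, hrpos⟩ :=
      h (X × Om G) (μ.prod ν) P hPm hPp hPmul hP1 (A ×ˢ C) hABmeas hABpos
    have hrR : r ∈ R := hr.1
    have hr1 : r ≠ 1 := hr.2
    have hpre : P r ⁻¹' (A ×ˢ C) = (T r ⁻¹' A) ×ˢ ((sh r) ⁻¹' C) := rfl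
    have hfact : (μ.prod ν) ((A ×ˢ C) ∩ P r ⁻¹' (A ×ˢ C))
        = μ (A ∩ T r ⁻¹' A) * ν (C ∩ (sh r) ⁻¹' C) := by
      rw [hpre, Set.prod_inter_prod, Measure.prod_prod]
    rw [hfact] at hrpos
    have hrK : r ∉ K := by
      intro hrK
      rw [cyl_inter_preimage hrK hr1] at hrpos
      simp at hrpos
    refine ⟨r, ⟨hrR, hrK⟩, ?_⟩
    rcases (CanonicallyOrderedAdd.mul_pos).1 hrpos with ⟨h1, -⟩
    exact h1
end
end

section
/- Let G be a locally compact, second countable, Hausdorff topological group and let P ⊆ G be such that for every neighborhood U of the identity the set UP contains an increasing finite products set FPi(g_n) for some sequence g_n in G with g_n → ∞. Then P is a set of measurable recurrence. -/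
open MeasureTheory Filter Topology Set Pointwise

noncomputable section

open scoped ENNReal symmDiff

section Aux13

open scoped ENNReal symmDiff

variable {G : Type*} [Group G]

private lemma stmt13_incProd_empty (g : ℕ → G) : incProd g (∅ : Finset ℕ) = 1 := by
  simp [incProd, Finset.sort_empty]

private lemma stmt13_incProd_insert_max (g : ℕ → G) {s : Finset ℕ} {m : ℕ}
    (h : ∀ b ∈ s, b < m) : incProd g (insert m s) = incProd g s * g m := by
  have hm : m ∉ s := fun hm => lt_irrefl m (h m hm)
  have hsort : (insert m s).sort (· ≤ ·) = s.sort (· ≤ ·) ++ [m] := by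
    refine (fun hp h2 => List.Perm.eq_of_pairwise' (Finset.pairwise_sort _ _) h2 hp) ?_ ?_
    · exact (Finset.sort_perm_toList _ _).trans ((Finset.toList_insert hm).trans
        ((List.Perm.cons m (Finset.sort_perm_toList _ _).symm).trans
          (List.perm_append_singleton _ _).symm))
    · refine List.pairwise_append.mpr ⟨Finset.pairwise_sort _ _, List.pairwise_singleton _ _, ?_⟩
      intro x hx y hy
      rw [List.mem_singleton] at hy
      subst hy
      exact le_of_lt (h x ((Finset.mem_sort _).mp hx))
  show (((insert m s).sort (· ≤ ·)).map g).prod = _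
  rw [hsort, List.map_append, List.prod_append]
  simp [incProd]

section Dyn

variable {X : Type*} [MeasurableSpace X] {μ : Measure X} {T : G → X → X} {A : Set X}

private lemma stmt13_preT (hmul : ∀ g h : G, ∀ x : X, T g (T h x) = T (g * h) x)
    (g h : G) (S : Set X) : T (g * h) ⁻¹' S = T h ⁻¹' (T g ⁻¹' S) := by
  ext x
  simp [Set.mem_preimage, hmul g h x]

private lemma stmt13_T1 (h1 : ∀ x : X, T 1 x = x) (S : Set X) : T 1 ⁻¹' S = S := by
  ext x
  simp [h1 x]

private lemma stmt13_dpsi (hmp : ∀ g : G, MeasurePreserving (T g) μ μ)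
    (hmul : ∀ g h : G, ∀ x : X, T g (T h x) = T (g * h) x)
    (hA : MeasurableSet A) (x y : G) :
    μ ((T x ⁻¹' A) ∆ (T y ⁻¹' A)) = μ ((T (x * y⁻¹) ⁻¹' A) ∆ A) := by
  have e : T y ⁻¹' ((T (x * y⁻¹) ⁻¹' A) ∆ A) = (T x ⁻¹' A) ∆ (T y ⁻¹' A) := by
    rw [Set.preimage_symmDiff, ← stmt13_preT hmul (x * y⁻¹) y A, inv_mul_cancel_right]
  rw [← e, (hmp y).measure_preimage
    (((hmp _).measurable hA).symmDiff hA).nullMeasurableSet]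

private lemma stmt13_psi_inv (hmp : ∀ g : G, MeasurePreserving (T g) μ μ)
    (hmul : ∀ g h : G, ∀ x : X, T g (T h x) = T (g * h) x)
    (h1 : ∀ x : X, T 1 x = x) (hA : MeasurableSet A) (g : G) :
    μ ((T g⁻¹ ⁻¹' A) ∆ A) = μ ((T g ⁻¹' A) ∆ A) := by
  have h := stmt13_dpsi hmp hmul hA 1 g
  rw [stmt13_T1 h1, one_mul] at h
  rw [← h, symmDiff_comm]

private lemma stmt13_psi_mul (hmp : ∀ g : G, MeasurePreserving (T g) μ μ)
    (hmul : ∀ g h : G, ∀ x : X, T g (T h x) = T (g * h) x)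
    (hA : MeasurableSet A) (g h : G) :
    μ ((T (g * h) ⁻¹' A) ∆ A) ≤ μ ((T g ⁻¹' A) ∆ A) + μ ((T h ⁻¹' A) ∆ A) := by
  have hsub : (T (g * h) ⁻¹' A) ∆ A ⊆
      (T h ⁻¹' ((T g ⁻¹' A) ∆ A)) ∪ ((T h ⁻¹' A) ∆ A) := by
    have t : (T (g * h) ⁻¹' A) ∆ A ⊆
        ((T (g * h) ⁻¹' A) ∆ (T h ⁻¹' A)) ∪ ((T h ⁻¹' A) ∆ A) := by
      simpa [Set.sup_eq_union] using symmDiff_triangle (T (g * h) ⁻¹' A) (T h ⁻¹' A) A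
    refine t.trans (Set.union_subset_union_left _ ?_)
    rw [stmt13_preT hmul g h A, ← Set.preimage_symmDiff]
  calc μ ((T (g * h) ⁻¹' A) ∆ A)
      ≤ μ (T h ⁻¹' ((T g ⁻¹' A) ∆ A)) + μ ((T h ⁻¹' A) ∆ A) :=
        (measure_mono hsub).trans (measure_union_le _ _)
    _ = μ ((T g ⁻¹' A) ∆ A) + μ ((T h ⁻¹' A) ∆ A) := by
        rw [(hmp h).measure_preimage
          (((hmp g).measurable hA).symmDiff hA).nullMeasurableSet]

private lemma stmt13_phi_inv (hmp : ∀ g : G, MeasurePreserving (T g) μ μ)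
    (hmul : ∀ g h : G, ∀ x : X, T g (T h x) = T (g * h) x)
    (h1 : ∀ x : X, T 1 x = x) (hA : MeasurableSet A) (g : G) :
    μ (A ∩ T g⁻¹ ⁻¹' A) = μ (A ∩ T g ⁻¹' A) := by
  have e : T g ⁻¹' (A ∩ T g⁻¹ ⁻¹' A) = (T g ⁻¹' A) ∩ A := by
    rw [Set.preimage_inter, ← stmt13_preT hmul g⁻¹ g A, inv_mul_cancel, stmt13_T1 h1]
  rw [← (hmp g).measure_preimage
    (hA.inter ((hmp g⁻¹).measurable hA)).nullMeasurableSet, e, Set.inter_comm]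

private lemma stmt13_pair_eq (hmp : ∀ g : G, MeasurePreserving (T g) μ μ)
    (hmul : ∀ g h : G, ∀ x : X, T g (T h x) = T (g * h) x)
    (hA : MeasurableSet A) (x y : G) :
    μ ((T x ⁻¹' A) ∩ (T y ⁻¹' A)) = μ (A ∩ T (y * x⁻¹) ⁻¹' A) := by
  have e : T x ⁻¹' (A ∩ T (y * x⁻¹) ⁻¹' A) = (T x ⁻¹' A) ∩ (T y ⁻¹' A) := by
    rw [Set.preimage_inter, ← stmt13_preT hmul (y * x⁻¹) x A, inv_mul_cancel_right]
  rw [← e, (hmp x).measure_preimage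
    (hA.inter ((hmp _).measurable hA)).nullMeasurableSet]

private lemma stmt13_phi_mul_le (hmp : ∀ g : G, MeasurePreserving (T g) μ μ)
    (hmul : ∀ g h : G, ∀ x : X, T g (T h x) = T (g * h) x)
    (hA : MeasurableSet A) (v p : G) :
    μ (A ∩ T (v * p) ⁻¹' A) ≤ μ (A ∩ T p ⁻¹' A) + μ ((T v ⁻¹' A) ∆ A) := by
  have hsub : A ∩ T (v * p) ⁻¹' A ⊆
      (A ∩ T p ⁻¹' A) ∪ T p ⁻¹' ((T v ⁻¹' A) ∆ A) := by
    intro x hx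
    obtain ⟨hxA, hx2⟩ := hx
    rw [stmt13_preT hmul v p A, Set.mem_preimage] at hx2
    by_cases hxp : T p x ∈ A
    · exact Or.inl ⟨hxA, hxp⟩
    · refine Or.inr ?_
      rw [Set.mem_preimage] at hx2 ⊢
      exact Set.mem_symmDiff.mpr (Or.inl ⟨hx2, hxp⟩)
  calc μ (A ∩ T (v * p) ⁻¹' A)
      ≤ μ (A ∩ T p ⁻¹' A) + μ (T p ⁻¹' ((T v ⁻¹' A) ∆ A)) :=
        (measure_mono hsub).trans (measure_union_le _ _)
    _ = μ (A ∩ T p ⁻¹' A) + μ ((T v ⁻¹' A) ∆ A) := by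
        rw [(hmp p).measure_preimage
          (((hmp v).measurable hA).symmDiff hA).nullMeasurableSet]

private lemma stmt13_bonferroni (μ : Measure X) (A : ℕ → Set X)
    (hA : ∀ i, MeasurableSet (A i)) (n : ℕ) :
    ∑ i ∈ Finset.range n, μ (A i) ≤
      μ (⋃ i ∈ Finset.range n, A i) +
        ∑ i ∈ Finset.range n, ∑ j ∈ Finset.range i, μ (A i ∩ A j) := by
  induction n with
  | zero => simp
  | succ n ih =>
    have hU : (⋃ i ∈ Finset.range n, A i) ∪ A n = ⋃ i ∈ Finset.range (n + 1), A i := by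
      rw [Finset.range_add_one, Finset.set_biUnion_insert, Set.union_comm]
    have hI : μ ((⋃ i ∈ Finset.range n, A i) ∩ A n) ≤
        ∑ j ∈ Finset.range n, μ (A n ∩ A j) := by
      have he : (⋃ i ∈ Finset.range n, A i) ∩ A n = ⋃ i ∈ Finset.range n, (A i ∩ A n) :=
        Set.iUnion₂_inter _ _
      rw [he]
      refine (measure_biUnion_finset_le _ _).trans ?_
      exact le_of_eq (Finset.sum_congr rfl fun j _ => by rw [Set.inter_comm])
    have hkey : μ (⋃ i ∈ Finset.range n, A i) + μ (A n) ≤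
        μ (⋃ i ∈ Finset.range (n + 1), A i) + ∑ j ∈ Finset.range n, μ (A n ∩ A j) := by
      rw [← measure_union_add_inter _ (hA n), hU]
      exact add_le_add_right hI _
    calc ∑ i ∈ Finset.range (n + 1), μ (A i)
        = (∑ i ∈ Finset.range n, μ (A i)) + μ (A n) := Finset.sum_range_succ _ _
      _ ≤ (μ (⋃ i ∈ Finset.range n, A i) +
            ∑ i ∈ Finset.range n, ∑ j ∈ Finset.range i, μ (A i ∩ A j)) + μ (A n) :=
          add_le_add_left ih _
      _ = (μ (⋃ i ∈ Finset.range n, A i) + μ (A n)) +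
            ∑ i ∈ Finset.range n, ∑ j ∈ Finset.range i, μ (A i ∩ A j) := by
          rw [add_right_comm]
      _ ≤ (μ (⋃ i ∈ Finset.range (n + 1), A i) + ∑ j ∈ Finset.range n, μ (A n ∩ A j)) +
            ∑ i ∈ Finset.range n, ∑ j ∈ Finset.range i, μ (A i ∩ A j) :=
          add_le_add_left hkey _
      _ = μ (⋃ i ∈ Finset.range (n + 1), A i) +
            ∑ i ∈ Finset.range (n + 1), ∑ j ∈ Finset.range i, μ (A i ∩ A j) := by
          rw [Finset.sum_range_succ (f := fun i => ∑ j ∈ Finset.range i, μ (A i ∩ A j))]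
          ring

private lemma stmt13_pigeonhole (μ : Measure X) [IsProbabilityMeasure μ]
    (A : ℕ → Set X) (hA : ∀ i, MeasurableSet (A i)) (a : ℝ≥0∞)
    (ha : ∀ i, μ (A i) = a) (hpos : 0 < a) :
    ∃ i j, i < j ∧ ENNReal.ofReal (a.toReal ^ 2 / 8) < μ (A i ∩ A j) := by
  by_contra hcon
  push_neg at hcon
  have hane : a ≠ ⊤ := by rw [← ha 0]; exact measure_ne_top μ _
  have harpos : 0 < a.toReal := ENNReal.toReal_pos hpos.ne' hane
  set ar : ℝ := a.toReal with har
  have har1 : ar ≤ 1 := by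
    have h01 : a ≤ 1 := by rw [← ha 0]; exact prob_le_one
    calc ar ≤ (1 : ℝ≥0∞).toReal := ENNReal.toReal_mono (by simp) h01
      _ = 1 := by simp
  set n : ℕ := ⌈(4 : ℝ) / ar⌉₊ with hn
  set c : ℝ≥0∞ := ENNReal.ofReal (ar ^ 2 / 8) with hc
  have hb := stmt13_bonferroni μ A hA n
  have hsum1 : ∑ i ∈ Finset.range n, μ (A i) = (n : ℝ≥0∞) * a := by
    simp [ha, Finset.sum_const, nsmul_eq_mul]
  have hpairs : ∑ i ∈ Finset.range n, ∑ j ∈ Finset.range i, μ (A i ∩ A j) ≤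
      (n : ℝ≥0∞) * ((n : ℝ≥0∞) * c) := by
    calc ∑ i ∈ Finset.range n, ∑ j ∈ Finset.range i, μ (A i ∩ A j)
        ≤ ∑ _i ∈ Finset.range n, ((n : ℝ≥0∞) * c) := by
          refine Finset.sum_le_sum fun i hi => ?_
          calc ∑ j ∈ Finset.range i, μ (A i ∩ A j)
              ≤ ∑ _j ∈ Finset.range i, c := by
                refine Finset.sum_le_sum fun j hj => ?_
                rw [Set.inter_comm]
                exact hcon j i (Finset.mem_range.mp hj)
            _ = (i : ℝ≥0∞) * c := by simp [Finset.sum_const, nsmul_eq_mul]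
            _ ≤ (n : ℝ≥0∞) * c := by
                gcongr
                exact_mod_cast (Finset.mem_range.mp hi).le
      _ = (n : ℝ≥0∞) * ((n : ℝ≥0∞) * c) := by simp [Finset.sum_const, nsmul_eq_mul]
  have htot : (n : ℝ≥0∞) * a ≤ 1 + (n : ℝ≥0∞) * ((n : ℝ≥0∞) * c) := by
    rw [← hsum1]
    exact hb.trans (add_le_add prob_le_one hpairs)
  have h4 : (4 : ℝ) / ar ≤ (n : ℝ) := Nat.le_ceil _
  have h5 : (n : ℝ) < 4 / ar + 1 := Nat.ceil_lt_add_one (by positivity)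
  have hna : (4 : ℝ) ≤ (n : ℝ) * ar := by
    rw [div_le_iff₀ harpos] at h4; linarith
  have hnb : (n : ℝ) * ar < 4 + ar := by
    have h6 := mul_lt_mul_of_pos_right h5 harpos
    rwa [add_mul, div_mul_cancel₀ _ harpos.ne', one_mul] at h6
  have hlt : 1 + (n : ℝ≥0∞) * ((n : ℝ≥0∞) * c) < (n : ℝ≥0∞) * a := by
    have haof : a = ENNReal.ofReal ar := by rw [har, ENNReal.ofReal_toReal hane]
    have hnof : (n : ℝ≥0∞) = ENNReal.ofReal (n : ℝ) := by
      simp [ENNReal.ofReal_natCast]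
    rw [haof, hnof, hc, ← ENNReal.ofReal_mul (by positivity),
      ← ENNReal.ofReal_mul (by positivity), ← ENNReal.ofReal_mul (by positivity),
      ← ENNReal.ofReal_one, ← ENNReal.ofReal_add (by norm_num) (by positivity)]
    refine (ENNReal.ofReal_lt_ofReal_iff (by nlinarith)).mpr ?_
    nlinarith [mul_nonneg (by linarith : (0:ℝ) ≤ (n:ℝ) * ar - 4)
      (by linarith : (0:ℝ) ≤ 5 - (n:ℝ) * ar)]
  exact absurd htot (not_le.mpr hlt)

end Dyn

private lemma stmt13_psi_cont {G : Type*} [Group G] [TopologicalSpace G] [IsTopologicalGroup G]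
    [LocallyCompactSpace G] [SecondCountableTopology G] [T2Space G]
    [MeasurableSpace G] [BorelSpace G]
    {X : Type*} [MeasurableSpace X] [MeasurableSpace.CountablyGenerated X]
    (μ : Measure X) [IsProbabilityMeasure μ] (T : G → X → X)
    (hT : Measurable fun p : G × X => T p.1 p.2)
    (hmp : ∀ g : G, MeasurePreserving (T g) μ μ)
    (hmul : ∀ g h : G, ∀ x : X, T g (T h x) = T (g * h) x)
    (h1 : ∀ x : X, T 1 x = x)
    {A : Set X} (hA : MeasurableSet A) {ε : ℝ≥0∞} (hε : 0 < ε) :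
    {g : G | μ ((T g ⁻¹' A) ∆ A) < ε} ∈ 𝓝 (1 : G) := by
  classical
  set ψ : G → ℝ≥0∞ := fun g => μ ((T g ⁻¹' A) ∆ A) with hψdef
  have hψinv : ∀ g : G, ψ g⁻¹ = ψ g := fun g => stmt13_psi_inv hmp hmul h1 hA g
  have hψmul : ∀ g h : G, ψ (g * h) ≤ ψ g + ψ h := fun g h => stmt13_psi_mul hmp hmul hA g h
  have hψd : ∀ x y : G, μ ((T x ⁻¹' A) ∆ (T y ⁻¹' A)) = ψ (x * y⁻¹) := fun x y =>
    stmt13_dpsi hmp hmul hA x y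
  -- measurability of ψ
  have hmeasψ : Measurable ψ := by
    have hS : MeasurableSet {p : G × X | p.2 ∈ (T p.1 ⁻¹' A) ∆ A} := by
      have he : {p : G × X | p.2 ∈ (T p.1 ⁻¹' A) ∆ A}
          = ((fun p : G × X => T p.1 p.2) ⁻¹' A) ∆ ((fun p : G × X => p.2) ⁻¹' A) := by
        ext p
        simp [Set.mem_symmDiff]
      rw [he]
      exact (hT hA).symmDiff (measurable_snd hA)
    have hm := measurable_measure_prodMk_left (ν := μ) hS
    have he2 : ψ = fun g => μ (Prod.mk g ⁻¹' {p : G × X | p.2 ∈ (T p.1 ⁻¹' A) ∆ A}) := by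
      funext g
      congr 1
    rw [he2]
    exact hm
  set δ : ℝ≥0∞ := ε / 2 with hδdef
  have hδ : 0 < δ := ENNReal.half_pos hε.ne'
  set V : Set G := {g : G | ψ g < δ} with hVdef
  have hVm : MeasurableSet V := measurableSet_lt hmeasψ measurable_const
  -- measurable sets are separable
  haveI : IsSeparable μ := isSeparable_of_sigmaFinite μ
  obtain ⟨𝒜, h𝒜c, h𝒜⟩ := exists_countable_measureDense (μ := μ)
  obtain ⟨f, hf⟩ := h𝒜c.exists_eq_range h𝒜.nonempty
  have hFg : ∀ g : G, MeasurableSet (T g ⁻¹' A) := fun g => (hmp g).measurable hA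
  -- selection of countable dense translates
  let Q : ℕ → ℕ → G → Prop := fun i k g => μ ((T g ⁻¹' A) ∆ f i) < ((k : ℝ≥0∞) + 1)⁻¹
  let sel : ℕ → ℕ → G := fun i k => if h : ∃ g : G, Q i k g then h.choose⁻¹ else 1
  have hcov : ∀ g : G, ∃ q : ℕ × ℕ, g ∈ sel q.1 q.2 • V := by
    intro g
    obtain ⟨k, hk⟩ := ENNReal.exists_inv_nat_lt (ENNReal.half_pos hδ.ne').ne'
    have hk1 : ((k : ℝ≥0∞) + 1)⁻¹ < δ / 2 := by
      refine lt_of_le_of_lt ?_ hk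
      exact ENNReal.inv_le_inv.mpr (le_add_of_nonneg_right zero_le_one)
    have hofr : ENNReal.ofReal (((k : ℝ) + 1)⁻¹) = ((k : ℝ≥0∞) + 1)⁻¹ := by
      rw [ENNReal.ofReal_inv_of_pos (by positivity)]
      congr 1
      rw [ENNReal.ofReal_add (by positivity) (by norm_num)]
      simp
    obtain ⟨t, ht𝒜, hμt⟩ := h𝒜.approx (T g⁻¹ ⁻¹' A) (hFg g⁻¹) (measure_ne_top μ _)
      (((k : ℝ) + 1)⁻¹) (by positivity)
    rw [hf] at ht𝒜
    obtain ⟨i, rfl⟩ := ht𝒜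
    rw [hofr] at hμt
    have hQ : ∃ g' : G, Q i k g' := ⟨g⁻¹, hμt⟩
    have hw := hQ.choose_spec
    have hsel : sel i k = hQ.choose⁻¹ := dif_pos hQ
    refine ⟨(i, k), ?_⟩
    rw [Set.mem_smul_set_iff_inv_smul_mem, hsel, inv_inv, smul_eq_mul]
    show ψ (hQ.choose * g) < δ
    have he3 : ψ (hQ.choose * g) = μ ((T hQ.choose ⁻¹' A) ∆ (T g⁻¹ ⁻¹' A)) := by
      rw [hψd hQ.choose g⁻¹, inv_inv]
    rw [he3]
    have htri : μ ((T hQ.choose ⁻¹' A) ∆ (T g⁻¹ ⁻¹' A)) ≤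
        μ ((T hQ.choose ⁻¹' A) ∆ f i) + μ (f i ∆ (T g⁻¹ ⁻¹' A)) := by
      refine (measure_mono ?_).trans (measure_union_le _ _)
      simpa [Set.sup_eq_union] using
        symmDiff_triangle (T hQ.choose ⁻¹' A) (f i) (T g⁻¹ ⁻¹' A)
    refine lt_of_le_of_lt htri ?_
    have h2' : μ (f i ∆ (T g⁻¹ ⁻¹' A)) < ((k : ℝ≥0∞) + 1)⁻¹ := by
      rw [symmDiff_comm]
      exact hμt
    calc μ ((T hQ.choose ⁻¹' A) ∆ f i) + μ (f i ∆ (T g⁻¹ ⁻¹' A))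
        < δ / 2 + δ / 2 := ENNReal.add_lt_add (hw.trans hk1) (h2'.trans hk1)
      _ = δ := ENNReal.add_halves δ
  -- Haar measure positivity of V
  set m : Measure G := Measure.haar with hm
  have hVpos : 0 < m V := by
    by_contra hcon
    push_neg at hcon
    have h0 : m V = 0 := le_antisymm hcon zero_le
    have hz : ∀ q : ℕ × ℕ, m (sel q.1 q.2 • V) = 0 := fun q => by
      rw [measure_smul]; exact h0
    have huniv : m (Set.univ : Set G) = 0 := by
      have hcover : (Set.univ : Set G) ⊆ ⋃ q : ℕ × ℕ, sel q.1 q.2 • V := fun g _ =>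
        Set.mem_iUnion.mpr (hcov g)
      exact measure_mono_null hcover (measure_iUnion_null hz)
    have := (isOpen_univ.measure_pos m ⟨(1 : G), trivial⟩).ne'
    exact this huniv
  -- Steinhaus
  have hnh := Measure.div_mem_nhds_one_of_haar_pos m V hVm hVpos
  refine Filter.mem_of_superset hnh ?_
  rintro x hx
  obtain ⟨b, hb, d, hd, rfl⟩ := hx
  show ψ (b / d) < ε
  rw [div_eq_mul_inv]
  calc ψ (b * d⁻¹) ≤ ψ b + ψ d⁻¹ := hψmul b d⁻¹
    _ = ψ b + ψ d := by rw [hψinv]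
    _ < δ + δ := ENNReal.add_lt_add hb hd
    _ = ε := by rw [hδdef, ENNReal.add_halves]

private lemma stmt13_thin {G : Type*} [Group G] [TopologicalSpace G] [IsTopologicalGroup G]
    (u : ℕ → G) (hu : Tendsto u atTop (cocompact G)) {K₂ : Set G} (hK₂ : IsCompact K₂) :
    ∃ n : ℕ → ℕ, StrictMono n ∧ ∀ α : Finset ℕ, α.Nonempty → incProd u (α.image n) ∉ K₂ := by
  classical
  have hstep : ∀ s : Finset ℕ, ∃ m : ℕ, (∀ x ∈ s, x < m) ∧
      ∀ β ∈ s.powerset, incProd u β * u m ∉ K₂ := by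
    intro s
    have hC : IsCompact (⋃ β ∈ s.powerset, (fun x => incProd u β * x) ⁻¹' K₂) := by
      refine (s.powerset).isCompact_biUnion fun β _ => ?_
      exact (Homeomorph.mulLeft (incProd u β)).isCompact_preimage.mpr hK₂
    have h1 : ∀ᶠ m' in atTop, u m' ∈ (⋃ β ∈ s.powerset, (fun x => incProd u β * x) ⁻¹' K₂)ᶜ :=
      hasBasis_cocompact.tendsto_right_iff.mp hu _ hC
    have h2 : ∀ᶠ m' in atTop, s.sup id < m' := eventually_gt_atTop _
    obtain ⟨m, hm1, hm2⟩ := (h1.and h2).exists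
    refine ⟨m, fun x hx => lt_of_le_of_lt (Finset.le_sup (f := id) hx) hm2,
      fun β hβ hmem => ?_⟩
    exact hm1 (Set.mem_biUnion hβ hmem)
  choose step hstep1 hstep2 using hstep
  let s : ℕ → Finset ℕ := fun k => Nat.rec (motive := fun _ => Finset ℕ) ∅
    (fun _ sk => insert (step sk) sk) k
  have hssucc : ∀ k, s (k + 1) = insert (step (s k)) (s k) := fun _ => rfl
  set n : ℕ → ℕ := fun k => step (s k) with hndef
  have hmem : ∀ k, n k ∈ s (k + 1) := fun k => Finset.mem_insert_self _ _
  have hsmono : Monotone s := monotone_nat_of_le_succ fun k =>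
    Finset.le_iff_subset.mpr (Finset.subset_insert _ _)
  have hlt : ∀ k, ∀ x ∈ s k, x < n k := fun k => hstep1 (s k)
  have hnmono : StrictMono n :=
    strictMono_nat_of_lt_succ fun k => hlt (k + 1) (n k) (hmem k)
  have hinv : ∀ k (α : Finset ℕ), α ⊆ s k → α.Nonempty → incProd u α ∉ K₂ := by
    intro k
    induction k with
    | zero =>
      intro α hα hne
      rw [show s 0 = ∅ from rfl, Finset.subset_empty] at hα
      exact absurd hα (Finset.nonempty_iff_ne_empty.mp hne)
    | succ k ih =>
      intro α hα hne
      rw [hssucc] at hα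
      by_cases hmα : step (s k) ∈ α
      · have hβ : α.erase (step (s k)) ⊆ s k := Finset.subset_insert_iff.mp hα
        have hcalc : incProd u α = incProd u (α.erase (step (s k))) * u (step (s k)) := by
          conv_lhs => rw [← Finset.insert_erase hmα]
          exact stmt13_incProd_insert_max u fun b hb => hlt k b (hβ hb)
        rw [hcalc]
        exact hstep2 (s k) _ (Finset.mem_powerset.mpr hβ)
      · refine ih α ?_ hne
        intro x hx
        rcases Finset.mem_insert.mp (hα hx) with h | h
        · exact absurd (h ▸ hx) hmα
        · exact h
  refine ⟨n, hnmono, fun α hne => ?_⟩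
  have hsubs : α.image n ⊆ s (α.sup id + 1) := by
    intro x hx
    obtain ⟨b, hb, rfl⟩ := Finset.mem_image.mp hx
    exact hsmono (Nat.succ_le_succ (Finset.le_sup (f := id) hb)) (hmem b)
  exact hinv (α.sup id + 1) _ hsubs (hne.image n)


end Aux13

/-- In a locally compact, second countable, Hausdorff group `G`, if for
every neighbourhood `U` of the identity the set `U * P` contains an increasing finite
products set of a sequence tending to infinity, then `P` is a set of measurable
recurrence. -/
theorem statement13 {G : Type} [Group G] [TopologicalSpace G] [IsTopologicalGroup G]
    [LocallyCompactSpace G] [SecondCountableTopology G] [T2Space G]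
    [MeasurableSpace G] [BorelSpace G]
    (P : Set G)
    (hP : ∀ U : Set G, U ∈ nhds (1 : G) →
      ∃ u : ℕ → G, Tendsto u atTop (cocompact G) ∧ FPi u ⊆ U * P) :
    IsRecurrenceSet P := by
  classical
  intro K hK X _ _ μ _ T hT hmp hmul h1 A hA hApos
  have hane : μ A ≠ ⊤ := measure_ne_top μ A
  have harpos : 0 < (μ A).toReal := ENNReal.toReal_pos hApos.ne' hane
  set c : ℝ≥0∞ := ENNReal.ofReal ((μ A).toReal ^ 2 / 8) with hc
  have hcpos : 0 < c := ENNReal.ofReal_pos.mpr (by positivity)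
  -- a small neighbourhood of 1 where ψ is < c, inside a compact neighbourhood
  have hU1 : {g : G | μ ((T g ⁻¹' A) ∆ A) < c} ∈ 𝓝 (1 : G) :=
    stmt13_psi_cont μ T hT hmp hmul h1 hA hcpos
  obtain ⟨K₀, hK₀c, hK₀n⟩ := exists_compact_mem_nhds (1 : G)
  have hUn : {g : G | μ ((T g ⁻¹' A) ∆ A) < c} ∩ K₀ ∈ 𝓝 (1 : G) := Filter.inter_mem hU1 hK₀n
  obtain ⟨u, hu, hFP⟩ := hP _ hUn
  have hK₂ : IsCompact (K₀ * K) := hK₀c.mul hK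
  obtain ⟨n, hmono, hnot⟩ := stmt13_thin u hu hK₂
  -- block products
  set B : ℕ → ℕ → G := fun i j => incProd u ((Finset.Ico i j).image n) with hB
  have hBstep : ∀ i j, i ≤ j → B i (j + 1) = B i j * u (n j) := by
    intro i j hij
    show incProd u ((Finset.Ico i (j + 1)).image n) = _
    rw [Nat.Ico_succ_right_eq_insert_Ico hij, Finset.image_insert]
    refine stmt13_incProd_insert_max u fun b hb => ?_
    obtain ⟨x, hx, rfl⟩ := Finset.mem_image.mp hb
    exact hmono (Finset.mem_Ico.mp hx).2
  have hBself : ∀ i, B i i = 1 := fun i => by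
    show incProd u ((Finset.Ico i i).image n) = 1
    rw [Finset.Ico_self, Finset.image_empty]
    exact stmt13_incProd_empty u
  have hco : ∀ i j k, i ≤ j → j ≤ k → B i j * B j k = B i k := by
    intro i j k hij hjk
    induction k, hjk using Nat.le_induction with
    | base => rw [hBself, mul_one]
    | succ k hk ih => rw [hBstep j k hk, hBstep i k (hij.trans hk), ← mul_assoc, ih]
  -- the recurrence family
  set As : ℕ → Set X := fun i => T (B 0 i)⁻¹ ⁻¹' A with hAs
  have hAsm : ∀ i, MeasurableSet (As i) := fun i => (hmp _).measurable hA
  have hAsa : ∀ i, μ (As i) = μ A := fun i =>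
    (hmp _).measure_preimage hA.nullMeasurableSet
  obtain ⟨i, j, hij, hgt⟩ := stmt13_pigeonhole μ As hAsm (μ A) hAsa hApos
  -- identify the pair intersection with a correlation along the block product
  have hq : (B 0 j)⁻¹ * ((B 0 i)⁻¹)⁻¹ = (B i j)⁻¹ := by
    have hcc := hco 0 i j (Nat.zero_le i) (le_of_lt hij)
    rw [inv_inv, ← hcc]
    group
  have hpair : μ (As i ∩ As j) = μ (A ∩ T (B i j) ⁻¹' A) := by
    calc μ (As i ∩ As j)
        = μ (A ∩ T ((B 0 j)⁻¹ * ((B 0 i)⁻¹)⁻¹) ⁻¹' A) :=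
          stmt13_pair_eq hmp hmul hA (B 0 i)⁻¹ (B 0 j)⁻¹
      _ = μ (A ∩ T (B i j)⁻¹ ⁻¹' A) := by rw [hq]
      _ = μ (A ∩ T (B i j) ⁻¹' A) := stmt13_phi_inv hmp hmul h1 hA (B i j)
  -- the element of the finite products set
  have hwFP : B i j ∈ FPi u :=
    ⟨(Finset.Ico i j).image n, (Finset.nonempty_Ico.mpr hij).image n, rfl⟩
  have hwK : B i j ∉ K₀ * K := hnot (Finset.Ico i j) (Finset.nonempty_Ico.mpr hij)
  obtain ⟨v, hv, p, hp, hvp⟩ := Set.mem_mul.mp (hFP hwFP)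
  obtain ⟨hvψ, hvK₀⟩ := hv
  have hpK : p ∉ K := fun hpk => hwK (hvp ▸ Set.mul_mem_mul hvK₀ hpk)
  have hφpos : 0 < μ (A ∩ T p ⁻¹' A) := by
    by_contra hz
    push_neg at hz
    have h0 : μ (A ∩ T p ⁻¹' A) = 0 := le_antisymm hz zero_le
    have h2 := stmt13_phi_mul_le hmp hmul hA v p
    rw [hvp, h0, zero_add] at h2
    have h3 : μ (A ∩ T (B i j) ⁻¹' A) < c := lt_of_le_of_lt h2 hvψ
    rw [← hpair] at h3
    exact absurd hgt (not_lt.mpr h3.le)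
  exact ⟨p, ⟨hp, hpK⟩, hφpos⟩
end
end

section
/- In any locally compact, second countable, Hausdorff topological group G, the class of sets of measurable recurrence is partition regular: if R₁ ∪ ⋯ ∪ R_r is a set of measurable recurrence, then R_i is a set of measurable recurrence for some i ∈ {1,…,r}. -/
open MeasureTheory Filter Topology Set Pointwise

noncomputable section

section Aux

variable {G : Type} [Group G] [TopologicalSpace G] [IsTopologicalGroup G]
    [MeasurableSpace G]

lemma not_isRecurrenceSet_empty : ¬ IsRecurrenceSet (∅ : Set G) := by
  intro h
  obtain ⟨g, hg, -⟩ := h ∅ isCompact_empty Unit (Measure.dirac ())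
    (fun _ x => x) measurable_snd (fun g => MeasurePreserving.id _)
    (fun _ _ _ => rfl) (fun _ => rfl) Set.univ MeasurableSet.univ
    (by simp)
  exact hg.1

lemma union_rec {R S : Set G} (h : IsRecurrenceSet (R ∪ S)) :
    IsRecurrenceSet R ∨ IsRecurrenceSet S := by
  by_contra hc
  push_neg at hc
  obtain ⟨h1, h2⟩ := hc
  unfold IsRecurrenceSet at h1 h2
  push_neg at h1 h2
  obtain ⟨K₁, hK₁, X₁, mX₁, cg₁, μ₁, pμ₁, T₁, hTm₁, hTp₁, hTmul₁, hT1₁, A₁, hAm₁, hA₁, hbad₁⟩ := h1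
  obtain ⟨K₂, hK₂, X₂, mX₂, cg₂, μ₂, pμ₂, T₂, hTm₂, hTp₂, hTmul₂, hT1₂, A₂, hAm₂, hA₂, hbad₂⟩ := h2
  obtain ⟨g, hg, hpos⟩ := h (K₁ ∪ K₂) (hK₁.union hK₂) (X₁ × X₂) (μ₁.prod μ₂)
    (fun g => Prod.map (T₁ g) (T₂ g))
    (by
      apply Measurable.prod
      · exact hTm₁.comp (measurable_fst.prodMk (measurable_fst.comp measurable_snd))
      · exact hTm₂.comp (measurable_fst.prodMk (measurable_snd.comp measurable_snd)))
    (fun g => (hTp₁ g).prod (hTp₂ g))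
    (fun g h x => by simp [Prod.map, hTmul₁, hTmul₂])
    (fun x => by simp [Prod.map, hT1₁, hT1₂])
    (A₁ ×ˢ A₂) (hAm₁.prod hAm₂)
    (by
      rw [Measure.prod_prod]
      exact ENNReal.mul_pos hA₁.ne' hA₂.ne')
  have key : (A₁ ×ˢ A₂) ∩ Prod.map (T₁ g) (T₂ g) ⁻¹' (A₁ ×ˢ A₂) =
      (A₁ ∩ T₁ g ⁻¹' A₁) ×ˢ (A₂ ∩ T₂ g ⁻¹' A₂) := by
    rw [Set.preimage_prod_map_prod, Set.prod_inter_prod]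
  rw [key, Measure.prod_prod] at hpos
  rcases hg.1 with hgR | hgS
  · have h0 := hbad₁ g ⟨hgR, fun hk => hg.2 (Or.inl hk)⟩
    rw [nonpos_iff_eq_zero] at h0
    rw [h0] at hpos
    simp at hpos
  · have h0 := hbad₂ g ⟨hgS, fun hk => hg.2 (Or.inr hk)⟩
    rw [nonpos_iff_eq_zero] at h0
    rw [h0] at hpos
    simp at hpos

end Aux

/-- In a locally compact, second countable, Hausdorff group, the class of
sets of measurable recurrence is partition regular: if a finite union `R 1 ∪ ⋯ ∪ R r`
is a set of measurable recurrence then some `R i` is. -/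
theorem statement14 {G : Type} [Group G] [TopologicalSpace G] [IsTopologicalGroup G]
    [LocallyCompactSpace G] [SecondCountableTopology G] [T2Space G]
    [MeasurableSpace G] [BorelSpace G]
    (r : ℕ) (R : Fin r → Set G)
    (hR : IsRecurrenceSet (⋃ i, R i)) :
    ∃ i, IsRecurrenceSet (R i) := by
  induction r with
  | zero =>
    exfalso
    apply not_isRecurrenceSet_empty (G := G)
    convert hR
    simp [Set.iUnion_of_empty]
  | succ n ih =>
    have hsplit : (⋃ i, R i) = (⋃ i : Fin n, R i.castSucc) ∪ R (Fin.last n) := by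
      ext x
      simp only [Set.mem_iUnion, Set.mem_union]
      constructor
      · rintro ⟨i, hi⟩
        rcases Fin.eq_castSucc_or_eq_last i with ⟨j, rfl⟩ | rfl
        · exact Or.inl ⟨j, hi⟩
        · exact Or.inr hi
      · rintro (⟨i, hi⟩ | h)
        · exact ⟨i.castSucc, hi⟩
        · exact ⟨Fin.last n, h⟩
    rw [hsplit] at hR
    rcases union_rec hR with h | h
    · obtain ⟨i, hi⟩ := ih _ h
      exact ⟨i.castSucc, hi⟩
    · exact ⟨Fin.last n, h⟩
end
end

section
/- Let G be a topological group that is not compact. Then for any thick subset T of G and any compact subset K of G there exists g ∈ G ∖ K such that Kg ⊆ T. -/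
open MeasureTheory Filter Topology Set Pointwise

noncomputable section

/-- In a non-compact topological group, for any thick set `T` and any
compact set `K` there exists `g ∉ K` with `K * g ⊆ T`. -/
theorem statement16 {G : Type} [Group G] [TopologicalSpace G] [IsTopologicalGroup G]
    (hNC : ¬ CompactSpace G)
    (T : Set G) (hT : ThickSet T) (K : Set G) (hK : IsCompact K) :
    ∃ g : G, g ∉ K ∧ (fun k => k * g) '' K ⊆ T := by
  have hKK : IsCompact (K * K⁻¹) := hK.mul hK.inv
  obtain ⟨h, hh⟩ : ∃ h : G, h ∉ K * K⁻¹ := by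
    by_contra hc
    push_neg at hc
    exact hNC ⟨(Set.eq_univ_of_forall hc) ▸ hKK⟩
  have hK' : IsCompact (K ∪ K * {h}) := hK.union (hK.mul isCompact_singleton)
  obtain ⟨g, hg⟩ := hT _ hK'
  by_cases hgK : g ∈ K
  · refine ⟨h * g, ?_, ?_⟩
    · intro hmem
      exact hh ⟨h * g, hmem, g⁻¹, Set.inv_mem_inv.mpr hgK, by group⟩
    · rintro x ⟨k, hk, rfl⟩
      have : (k * h) * g ∈ T := hg ⟨k * h, Or.inr ⟨k, hk, h, rfl, rfl⟩, rfl⟩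
      simpa [mul_assoc] using this
  · exact ⟨g, hgK, fun x ⟨k, hk, hx⟩ => hg ⟨k, Or.inl hk, hx⟩⟩
end
end

section
/- Let G be a group, S ⊆ G any subset, and F ⊆ G a non-empty subset. Then there exists a subset S′ ⊆ S such that F⁻¹FS′ ⊇ S and f₁S′ ∩ f₂S′ = ∅ for any distinct f₁, f₂ ∈ F. -/
open MeasureTheory Filter Topology Set Pointwise

noncomputable section

/-- For any subsets `S, F` of a group `G` with `F` nonempty, there is
`S' ⊆ S` with `S ⊆ F⁻¹ * F * S'` whose translates `f • S'` for distinct `f ∈ F` are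
pairwise disjoint. -/
theorem statement17 {G : Type} [Group G] (S F : Set G) (hF : F.Nonempty) :
    ∃ S' : Set G, S' ⊆ S ∧ S ⊆ F⁻¹ * F * S' ∧
      ∀ f₁ ∈ F, ∀ f₂ ∈ F, f₁ ≠ f₂ → Disjoint (f₁ • S') (f₂ • S') := by
  set P : Set G → Prop := fun T => T ⊆ S ∧
    ∀ a ∈ T, ∀ b ∈ T, (∃ f₁ ∈ F, ∃ f₂ ∈ F, f₁ * a = f₂ * b) → a = b with hP
  obtain ⟨S', hS'⟩ : ∃ S', Maximal P S' := by
    apply zorn_subset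
    intro c hc hchain
    refine ⟨⋃₀ c, ⟨?_, ?_⟩, fun s hs => subset_sUnion_of_mem hs⟩
    · exact sUnion_subset fun t ht => (hc ht).1
    · rintro a ⟨ta, hta, ha⟩ b ⟨tb, htb, hb⟩ hab
      rcases hchain.total hta htb with h | h
      · exact (hc htb).2 a (h ha) b hb hab
      · exact (hc hta).2 a ha b (h hb) hab
  obtain ⟨hsub, hprop⟩ := hS'.prop
  refine ⟨S', hsub, ?_, ?_⟩
  · intro s hs
    by_cases hmem : s ∈ S'
    · obtain ⟨f, hf⟩ := hF
      exact ⟨f⁻¹ * f, mul_mem_mul (inv_mem_inv.2 hf) hf, s, hmem, by group⟩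
    · -- maximality: S' ∪ {s} fails P
      have this : ¬ (insert s S' ⊆ S ∧ ∀ a ∈ insert s S', ∀ b ∈ insert s S',
          (∃ f₁ ∈ F, ∃ f₂ ∈ F, f₁ * a = f₂ * b) → a = b) :=
        fun h => hmem (hS'.2 h (subset_insert s S') (mem_insert s S'))
      push_neg at this
      obtain ⟨a, ha, b, hb, ⟨f₁, hf₁, f₂, hf₂, heq⟩, hab⟩ :=
        this (insert_subset hs hsub)
      rcases ha with rfl | ha
      · rcases hb with rfl | hb
        · exact absurd rfl hab
        · refine ⟨f₁⁻¹ * f₂, mul_mem_mul (inv_mem_inv.2 hf₁) hf₂, b, hb, ?_⟩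
          show f₁⁻¹ * f₂ * b = a; rw [mul_assoc, ← heq]; group
      · rcases hb with rfl | hb
        · refine ⟨f₂⁻¹ * f₁, mul_mem_mul (inv_mem_inv.2 hf₂) hf₁, a, ha, ?_⟩
          show f₂⁻¹ * f₁ * a = b; rw [mul_assoc, heq]; group
        · exact absurd (hprop a ha b hb ⟨f₁, hf₁, f₂, hf₂, heq⟩) hab
  · intro f₁ hf₁ f₂ hf₂ hne
    rw [Set.disjoint_left]
    rintro x ⟨a, ha, rfl⟩ ⟨b, hb, hx⟩
    have hab : a = b := hprop a ha b hb ⟨f₁, hf₁, f₂, hf₂, hx.symm⟩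
    subst hab
    exact hne (mul_right_cancel hx.symm)
end
end

section
/- Let G be a locally compact, second countable, Hausdorff, amenable topological group that is not compact. Then for every relatively compact neighborhood U of the identity there exists a decreasing sequence S₁ ⊇ S₂ ⊇ ⋯ of discrete, syndetic subsets of G such that the two-sided upper Banach density of US_n tends to 0 as n → ∞. -/
open MeasureTheory Filter Topology Set Pointwise

noncomputable section

section AuxiliaryForStatement18

open MeasureTheory Filter Topology Set Pointwise

variable {G : Type} [Group G] [TopologicalSpace G] [IsTopologicalGroup G]

/-- right-coset separation -/
def RSep (V S : Set G) : Prop := S.Pairwise fun a b => Disjoint (V * {a}) (V * {b})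

set_option linter.unusedSectionVars false
set_option linter.unusedVariables false

theorem exists_maximal_sep (V A : Set G) (hV : V.Nonempty) :
    ∃ S ⊆ A, RSep V S ∧ ∀ a ∈ A, ∃ s ∈ S, ¬ Disjoint (V * {a}) (V * {s}) := by
  obtain ⟨S, hS⟩ := zorn_subset {S | S ⊆ A ∧ RSep V S} (by
    intro c hc hchain
    refine ⟨⋃₀ c, ⟨?_, ?_⟩, fun s hs => subset_sUnion_of_mem hs⟩
    · exact sUnion_subset fun s hs => (hc hs).1
    · intro a ha b hb hab
      obtain ⟨s, hs, has⟩ := ha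
      obtain ⟨t, ht, hbt⟩ := hb
      rcases hchain.total hs ht with h | h
      · exact (hc ht).2 (h has) hbt hab
      · exact (hc hs).2 has (h hbt) hab)
  refine ⟨S, hS.prop.1, hS.prop.2, fun a ha => ?_⟩
  by_cases haS : a ∈ S
  · refine ⟨a, haS, fun h => ?_⟩
    have : (V * ({a} : Set G)).Nonempty := hV.mul (singleton_nonempty a)
    exact this.ne_empty (by simpa using h.inter_eq)
  · by_contra hcon
    push_neg at hcon
    have hins : insert a S ∈ {S | S ⊆ A ∧ RSep V S} := by
      refine ⟨insert_subset ha hS.prop.1, ?_⟩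
      refine hS.prop.2.insert fun b hb hab => ?_
      exact ⟨hcon b hb, (hcon b hb).symm⟩
    exact haS (hS.2 hins (subset_insert a S) (mem_insert a S))

theorem cover_of_touch {V : Set G} {a s : G} (h : ¬ Disjoint (V * {a}) (V * {s})) :
    a ∈ (V⁻¹ * V) * {s} := by
  rw [Set.not_disjoint_iff] at h
  obtain ⟨x, hx1, hx2⟩ := h
  rw [Set.mul_singleton] at hx1 hx2
  obtain ⟨v, hv, rfl⟩ := hx1
  obtain ⟨w, hw, hx⟩ := hx2
  rw [Set.mul_singleton]
  refine ⟨v⁻¹ * w, Set.mul_mem_mul (Set.inv_mem_inv.mpr hv) hw, ?_⟩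
  show v⁻¹ * w * s = a
  simp only at hx
  rw [mul_assoc, hx, ← mul_assoc, inv_mul_cancel, one_mul]

theorem exists_disjoint_translates [NoncompactSpace G] {C : Set G} (hC : IsCompact C)
    (h1 : (1:G) ∈ C) (n : ℕ) :
    ∃ k : ℕ → G, k 0 = 1 ∧ ∀ i ≤ n, ∀ j ≤ n, i ≠ j →
      Disjoint (({k i} : Set G) * C) ({k j} * C) := by
  induction n with
  | zero => exact ⟨fun _ => 1, rfl, by omega⟩
  | succ n ih =>
    obtain ⟨k, hk0, hk⟩ := ih
    have hcpt : IsCompact (⋃ j ∈ Finset.range (n+1), ({k j} : Set G) * (C * C⁻¹)) := by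
      apply (Finset.range (n+1)).isCompact_biUnion
      intro j _
      exact (isCompact_singleton).mul (hC.mul hC.inv)
    obtain ⟨g, hg⟩ : ∃ g : G, g ∉ ⋃ j ∈ Finset.range (n+1), ({k j} : Set G) * (C * C⁻¹) := by
      by_contra h
      push_neg at h
      exact hcpt.ne_univ (eq_univ_of_forall h)
    refine ⟨fun i => if i = n+1 then g else k i, by simp [hk0], ?_⟩
    have key : ∀ j ≤ n, Disjoint (({g} : Set G) * C) ({k j} * C) := by
      intro j hj
      rw [Set.disjoint_left]
      rintro x ⟨a, ha, c, hc, rfl⟩ ⟨b, hb, d, hd, hx⟩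
      simp only [mem_singleton_iff] at ha hb
      subst ha hb
      apply hg
      refine Set.mem_biUnion (show j ∈ Finset.range (n+1) from Finset.mem_range.mpr (by omega)) ?_
      rw [Set.singleton_mul]
      refine ⟨d * c⁻¹, Set.mul_mem_mul hd (Set.inv_mem_inv.mpr hc), ?_⟩
      simp only at hx
      show k j * (d * c⁻¹) = a
      rw [← mul_assoc, hx, mul_assoc, mul_inv_cancel, mul_one]
    intro i hi j hj hij
    rcases eq_or_ne i (n+1) with hi' | hi' <;> rcases eq_or_ne j (n+1) with hj' | hj'
    · omega
    · subst hi'; simp only [if_pos rfl, if_neg hj']; exact key j (by omega)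
    · subst hj'; simp only [if_pos rfl, if_neg hi']; exact (key i (by omega)).symm
    · simp only [if_neg hi', if_neg hj']; exact hk i (by omega) j (by omega) hij

theorem rsep_countable [SecondCountableTopology G] {V S : Set G} (hsep : RSep V S)
    {U' : Set G} (hU'o : IsOpen U') (h1U' : (1:G) ∈ U') (hU'V : U' ⊆ V) : S.Countable := by
  obtain ⟨D, hDc, hDd⟩ := TopologicalSpace.exists_countable_dense G
  have hchoice : ∀ s : G, s ∈ S → ∃ d, d ∈ D ∧ d ∈ U' * {s} := by
    intro s _
    have hne : (U' * ({s} : Set G)).Nonempty := ⟨s, 1, h1U', s, rfl, one_mul s⟩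
    have hop : IsOpen (U' * ({s} : Set G)) := hU'o.mul_right
    obtain ⟨d, hd1, hd2⟩ := hDd.inter_open_nonempty _ hop hne
    exact ⟨d, hd2, hd1⟩
  choose f hf1 hf2 using hchoice
  have : Countable S := by
    have : Countable D := hDc.to_subtype
    refine Function.Injective.countable
      (f := fun s : S => (⟨f s.1 s.2, hf1 s.1 s.2⟩ : D)) ?_
    rintro ⟨s, hs⟩ ⟨t, ht⟩ hab
    have h : f s hs = f t ht := congrArg Subtype.val hab
    ext
    by_contra hne
    have h1 := hf2 s hs
    have h2 : f s hs ∈ U' * ({t} : Set G) := h ▸ hf2 t ht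
    exact (hsep hs ht hne).ne_of_mem (Set.mul_subset_mul_right hU'V h1)
      (Set.mul_subset_mul_right hU'V h2) rfl
  exact Set.countable_coe_iff.mp this

theorem mul_countable_measurable [T2Space G] [MeasurableSpace G] [BorelSpace G]
    {C S : Set G} (hC : IsCompact C) (hS : S.Countable) : MeasurableSet (C * S) := by
  have : C * S = ⋃ s ∈ S, C * {s} := by
    ext x
    simp only [Set.mem_mul, Set.mem_iUnion, Set.mem_singleton_iff]
    constructor
    · rintro ⟨c, hc, s, hs, rfl⟩; exact ⟨s, hs, c, hc, s, rfl, rfl⟩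
    · rintro ⟨s, hs, c, hc, t, rfl, rfl⟩; exact ⟨c, hc, t, hs, rfl⟩
  rw [this]
  exact MeasurableSet.biUnion hS fun s _ =>
    ((hC.mul isCompact_singleton).isClosed).measurableSet

theorem rsep_discrete [T2Space G] {V S : Set G} (hsep : RSep V S)
    {U' : Set G} (hU'o : IsOpen U') (h1U' : (1:G) ∈ U') (hU'V : U' ⊆ V) :
    DiscreteTopology S := by
  rw [discreteTopology_subtype_iff]
  intro x hx
  rw [← Filter.empty_mem_iff_bot]
  have hA : U' * ({x} : Set G) ∩ {x}ᶜ ∈ 𝓝[≠] x := by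
    rw [mem_nhdsWithin]
    exact ⟨U' * {x}, hU'o.mul_right, ⟨1, h1U', x, rfl, one_mul x⟩, fun y hy => hy⟩
  have := Filter.inter_mem_inf hA (Filter.mem_principal_self S)
  convert this using 1
  symm
  rw [Set.eq_empty_iff_forall_notMem]
  rintro y ⟨⟨hyU, hyx⟩, hyS⟩
  simp only [Set.mem_compl_iff, Set.mem_singleton_iff] at hyx
  exact (hsep hx hyS (Ne.symm hyx)).ne_of_mem (Set.mul_subset_mul_right hU'V hyU)
    ⟨1, hU'V h1U', y, rfl, one_mul y⟩ rfl

theorem density_core [MeasurableSpace G] [BorelSpace G] (m : Measure G) [m.IsHaarMeasure]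
    {Φ : ℕ → G → ℝ} (hpos : ∀ N x, 0 ≤ Φ N x) (hint : ∀ N, Integrable (Φ N) m)
    (hone : ∀ N, ∫ x, Φ N x ∂m = 1)
    (hrei : ∀ g : G, Tendsto (fun N => ∫ x, |Φ N (g⁻¹ * x) - Φ N x| ∂m) atTop (nhds 0))
    {E : Set G} (hE : MeasurableSet E) (n : ℕ) (k : ℕ → G)
    (hdisj : ∀ i ≤ n, ∀ j ≤ n, i ≠ j →
      Disjoint ((fun x => (k i)⁻¹ * x) ⁻¹' E) ((fun x => (k j)⁻¹ * x) ⁻¹' E)) :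
    limsup (fun N => ∫ x in E, Φ N x ∂m) atTop ≤ 1/(n+1) := by
  set A : ℕ → Set G := fun i => (fun x => (k i)⁻¹ * x) ⁻¹' E with hA
  have hAmeas : ∀ i, MeasurableSet (A i) := fun i => hE.preimage (measurable_const_mul _)
  set err : ℕ → ℕ → ℝ := fun i N => ∫ x, |Φ N (k i * x) - Φ N x| ∂m with herr
  have herr0 : ∀ i, Tendsto (fun N => err i N) atTop (nhds 0) := by
    intro i
    have := hrei (k i)⁻¹
    simpa [herr] using this
  have hsum : ∀ N, ∑ i ∈ Finset.range (n+1), ∫ x in A i, Φ N x ∂m ≤ 1 := by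
    intro N
    have heq : ∀ i, ∫ x in A i, Φ N x ∂m = ∫ x, (A i).indicator (Φ N) x ∂m :=
      fun i => (integral_indicator (hAmeas i)).symm
    calc ∑ i ∈ Finset.range (n+1), ∫ x in A i, Φ N x ∂m
        = ∫ x, ∑ i ∈ Finset.range (n+1), (A i).indicator (Φ N) x ∂m := by
          rw [integral_finset_sum _ fun i _ => (hint N).indicator (hAmeas i)]
          exact Finset.sum_congr rfl fun i _ => heq i
      _ ≤ ∫ x, Φ N x ∂m := by
          apply integral_mono
          · exact integrable_finset_sum _ fun i _ => (hint N).indicator (hAmeas i)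
          · exact hint N
          · intro x
            dsimp only
            by_cases hx : ∃ i ∈ Finset.range (n+1), x ∈ A i
            · obtain ⟨i0, hi0, hxi0⟩ := hx
              rw [Finset.sum_eq_single_of_mem i0 hi0 (fun j hj hji => by
                have : x ∉ A j := fun hxj =>
                  (hdisj j (Nat.lt_succ_iff.mp (Finset.mem_range.mp hj)) i0
                    (Nat.lt_succ_iff.mp (Finset.mem_range.mp hi0)) hji).ne_of_mem hxj hxi0 rfl
                simp [Set.indicator_of_notMem this])]
              exact Set.indicator_le_self' (fun x _ => hpos N x) x
            · push_neg at hx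
              rw [Finset.sum_eq_zero fun i hi => Set.indicator_of_notMem (hx i hi) _]
              exact hpos N x
      _ = 1 := hone N
  have hstep2 : ∀ N, ∀ i ≤ n, ∫ x in E, Φ N x ∂m ≤ ∫ x in A i, Φ N x ∂m + err i N := by
    intro N i _
    have hchange : ∫ x in A i, Φ N x ∂m = ∫ x in E, Φ N (k i * x) ∂m := by
      rw [← integral_indicator (hAmeas i), ← integral_indicator hE]
      calc ∫ x, (A i).indicator (Φ N) x ∂m
          = ∫ x, (A i).indicator (Φ N) (k i * x) ∂m :=
            (integral_mul_left_eq_self ((A i).indicator (Φ N)) (k i)).symm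
        _ = ∫ x, E.indicator (fun z => Φ N (k i * z)) x ∂m := by
            congr 1; ext x
            by_cases hx : x ∈ E
            · rw [Set.indicator_of_mem hx]
              have : k i * x ∈ A i := by simp [hA, hx]
              rw [Set.indicator_of_mem this]
            · have : k i * x ∉ A i := by simp [hA, hx]
              rw [Set.indicator_of_notMem hx, Set.indicator_of_notMem this]
    rw [hchange]
    have hsub : ∫ x in E, Φ N x ∂m - ∫ x in E, Φ N (k i * x) ∂m
        = ∫ x in E, (Φ N x - Φ N (k i * x)) ∂m :=
      (integral_sub ((hint N).restrict) (((hint N).comp_mul_left (k i)).restrict)).symm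
    have hdiff : ∫ x in E, (Φ N x - Φ N (k i * x)) ∂m
        ≤ ∫ x in E, |Φ N (k i * x) - Φ N x| ∂m := by
      apply integral_mono (((hint N).restrict).sub (((hint N).comp_mul_left (k i)).restrict))
        ((((hint N).comp_mul_left (k i)).restrict.sub ((hint N).restrict)).abs)
      intro x
      simp only [Pi.sub_apply]
      rw [abs_sub_comm]
      exact le_abs_self _
    have hEfull : ∫ x in E, |Φ N (k i * x) - Φ N x| ∂m ≤ err i N := by
      apply integral_mono_measure Measure.restrict_le_self
      · exact ae_of_all _ fun x => abs_nonneg _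
      · exact (((hint N).comp_mul_left (k i)).sub (hint N)).abs
    linarith
  have hbound : ∀ N, ∫ x in E, Φ N x ∂m
      ≤ (1 + ∑ i ∈ Finset.range (n+1), err i N) / (n+1) := by
    intro N
    rw [le_div_iff₀ (by positivity)]
    calc (∫ x in E, Φ N x ∂m) * (n+1)
        = ∑ _i ∈ Finset.range (n+1), ∫ x in E, Φ N x ∂m := by
          rw [Finset.sum_const, Finset.card_range, nsmul_eq_mul]
          push_cast; ring
      _ ≤ ∑ i ∈ Finset.range (n+1), (∫ x in A i, Φ N x ∂m + err i N) :=
          Finset.sum_le_sum fun i hi => hstep2 N i (Nat.lt_succ_iff.mp (Finset.mem_range.mp hi))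
      _ = (∑ i ∈ Finset.range (n+1), ∫ x in A i, Φ N x ∂m)
            + ∑ i ∈ Finset.range (n+1), err i N := Finset.sum_add_distrib
      _ ≤ 1 + ∑ i ∈ Finset.range (n+1), err i N := by
          have := hsum N; linarith
  have hb : Tendsto (fun N => (1 + ∑ i ∈ Finset.range (n+1), err i N) / (n+1))
      atTop (nhds (1/(n+1) : ℝ)) := by
    have hsum0 : Tendsto (fun N => ∑ i ∈ Finset.range (n+1), err i N) atTop (nhds 0) := by
      have := tendsto_finset_sum (Finset.range (n+1)) (fun i (_ : i ∈ Finset.range (n+1)) => herr0 i)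
      simpa using this
    have := ((tendsto_const_nhds (x := (1:ℝ))).add hsum0).div_const ((n:ℝ)+1)
    simpa using this
  calc limsup (fun N => ∫ x in E, Φ N x ∂m) atTop
      ≤ limsup (fun N => (1 + ∑ i ∈ Finset.range (n+1), err i N) / (n+1)) atTop := by
        refine limsup_le_limsup (Eventually.of_forall hbound) ?_ ?_
        · exact IsBoundedUnder.isCoboundedUnder_le
            ⟨0, eventually_map.mpr (Eventually.of_forall fun (N : ℕ) =>
              integral_nonneg (fun x => hpos N x))⟩
        · exact hb.isBoundedUnder_le
    _ = 1/(n+1) := hb.limsup_eq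

end AuxiliaryForStatement18

/-- In a non-compact, locally compact, second countable, Hausdorff,
amenable group, for every relatively compact neighbourhood `U` of the identity there is
a decreasing sequence of discrete syndetic sets `S n` with the two-sided upper Banach
density of `U * S n` tending to `0`. -/
theorem statement18 {G : Type} [Group G] [TopologicalSpace G] [IsTopologicalGroup G]
    [LocallyCompactSpace G] [SecondCountableTopology G] [T2Space G]
    [MeasurableSpace G] [BorelSpace G]
    (m : Measure G) [m.IsHaarMeasure]
    (hAmen : HasLeftInvariantMean G) (hNC : ¬ CompactSpace G)
    (U : Set G) (hU : U ∈ nhds (1 : G)) (hUc : IsCompact (closure U)) :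
    ∃ S : ℕ → Set G,
      (∀ n, S (n + 1) ⊆ S n) ∧
      (∀ n, SyndeticSet (S n)) ∧
      (∀ n, DiscreteTopology (S n)) ∧
      Tendsto (fun n => upperBanachDens m (U * S n)) atTop (nhds 0) := by
  classical
  haveI : NoncompactSpace G := not_compactSpace_iff.mp hNC
  set C := closure U with hCdef
  have h1U : (1:G) ∈ U := mem_of_mem_nhds hU
  have h1C : (1:G) ∈ C := subset_closure h1U
  have h1U' : (1:G) ∈ interior U := mem_interior_iff_mem_nhds.mpr hU
  -- disjoint translate families
  choose k hk0 hkdisj using fun n => exists_disjoint_translates (G := G) hUc h1C n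
  -- the separation sets V n
  set V : ℕ → Set G := fun n => (k n '' Set.Iic n) * C with hVdef
  have hVne : ∀ n, (V n).Nonempty := fun n =>
    ⟨1, ⟨1, ⟨0, Set.mem_Iic.mpr (Nat.zero_le n), hk0 n⟩, 1, h1C, one_mul 1⟩⟩
  have hCV : ∀ n, C ⊆ V n := by
    intro n c hc
    exact ⟨1, ⟨0, Set.mem_Iic.mpr (Nat.zero_le n), hk0 n⟩, c, hc, one_mul c⟩
  have hU'V : ∀ n, interior U ⊆ V n := fun n =>
    (interior_subset.trans subset_closure).trans (hCV n)
  -- the nested maximal separated sets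
  have hrec : ∀ (n : ℕ) (A : Set G), ∃ S, S ⊆ A ∧ RSep (V n) S ∧
      ∀ a ∈ A, ∃ s ∈ S, ¬ Disjoint (V n * {a}) (V n * {s}) := by
    intro n A
    obtain ⟨S, h1, h2, h3⟩ := exists_maximal_sep (V n) A (hVne n)
    exact ⟨S, h1, h2, h3⟩
  choose T hT1 hT2 hT3 using hrec
  set S : ℕ → Set G := fun n => Nat.rec (T 0 Set.univ) (fun n Sn => T (n+1) Sn) n with hSdef
  have hS0 : S 0 = T 0 Set.univ := rfl
  have hSsucc : ∀ n, S (n+1) = T (n+1) (S n) := fun n => rfl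
  have hsub : ∀ n, S (n+1) ⊆ S n := fun n => hT1 (n+1) (S n)
  have hsep : ∀ n, RSep (V n) (S n) := by
    intro n
    cases n with
    | zero => exact hT2 0 Set.univ
    | succ n => exact hT2 (n+1) (S n)
  have htouch : ∀ n, ∀ a ∈ S n, ∃ s ∈ S (n+1), ¬ Disjoint (V (n+1) * {a}) (V (n+1) * {s}) :=
    fun n => hT3 (n+1) (S n)
  -- compactness of the V n
  have hVcomp : ∀ n, IsCompact (V n) := fun n =>
    (((Set.finite_Iic n).image (k n)).isCompact).mul hUc
  -- syndeticity
  have hsyn : ∀ n, SyndeticSet (S n) := by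
    have key : ∀ n, ∃ K : Set G, IsCompact K ∧ ∀ x : G, x ∈ K * S n := by
      intro n
      induction n with
      | zero =>
        refine ⟨(V 0)⁻¹ * V 0, ((hVcomp 0).inv).mul (hVcomp 0), fun x => ?_⟩
        obtain ⟨s, hs, hto⟩ := hT3 0 Set.univ x (Set.mem_univ x)
        have hmem := cover_of_touch hto
        rw [Set.mul_singleton] at hmem
        obtain ⟨w, hw, hws⟩ := hmem
        exact ⟨w, hw, s, hs, hws⟩
      | succ n ih =>
        obtain ⟨K, hKc, hK⟩ := ih
        refine ⟨K * ((V (n+1))⁻¹ * V (n+1)),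
          hKc.mul (((hVcomp (n+1)).inv).mul (hVcomp (n+1))), fun x => ?_⟩
        obtain ⟨κ, hκ, s, hs, hx⟩ := hK x
        obtain ⟨s', hs', hto⟩ := htouch n s hs
        have hmem := cover_of_touch hto
        rw [Set.mul_singleton] at hmem
        obtain ⟨w, hw, hws⟩ := hmem
        simp only at hws hx
        refine ⟨κ * w, Set.mul_mem_mul hκ hw, s', hs', ?_⟩
        show κ * w * s' = x
        rw [mul_assoc, hws, hx]
    intro n
    obtain ⟨K, hKc, hK⟩ := key n
    exact ⟨K, hKc, Set.eq_univ_of_forall hK⟩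
  -- discreteness
  have hdisc : ∀ n, DiscreteTopology (S n) := fun n =>
    rsep_discrete (hsep n) isOpen_interior h1U' (hU'V n)
  -- countability and measurability
  have hmeas : ∀ n, MeasurableSet (C * S n) := fun n =>
    mul_countable_measurable hUc (rsep_countable (hsep n) isOpen_interior h1U' (hU'V n))
  -- key density estimate
  have hdens : ∀ n, ∀ Φ : ℕ → G → ℝ, IsTwoSidedReiter m Φ →
      upperDensReiter m Φ (U * S n) ≤ 1/(n+1) ∧ 0 ≤ upperDensReiter m Φ (U * S n) := by
    intro n Φ hΦ
    obtain ⟨⟨hpos, hint, hone, hrei⟩, -⟩ := hΦ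
    -- disjointness of the shifted copies of C * S n
    have hdisj : ∀ i ≤ n, ∀ j ≤ n, i ≠ j →
        Disjoint ((fun x => (k n i)⁻¹ * x) ⁻¹' (C * S n)) ((fun x => (k n j)⁻¹ * x) ⁻¹' (C * S n)) := by
      intro i hi j hj hij
      rw [Set.disjoint_left]
      rintro x hxi hxj
      simp only [Set.mem_preimage] at hxi hxj
      obtain ⟨c, hc, s, hs, hcs⟩ := hxi
      obtain ⟨c', hc', s', hs', hcs'⟩ := hxj
      simp only at hcs hcs'
      have hx1 : x = (k n i * c) * s := by rw [mul_assoc, hcs]; group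
      have hx2 : x = (k n j * c') * s' := by rw [mul_assoc, hcs']; group
      rcases eq_or_ne s s' with rfl | hne
      · have : k n i * c = k n j * c' := by
          have := hx1.symm.trans hx2
          exact mul_right_cancel this
        exact (hkdisj n i hi j hj hij).ne_of_mem
          (Set.mul_mem_mul (Set.mem_singleton _) hc)
          (Set.mul_mem_mul (Set.mem_singleton _) hc') this
      · have hmemVi : k n i * c ∈ V n :=
          Set.mul_mem_mul ⟨i, Set.mem_Iic.mpr hi, rfl⟩ hc
        have hmemVj : k n j * c' ∈ V n :=
          Set.mul_mem_mul ⟨j, Set.mem_Iic.mpr hj, rfl⟩ hc'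
        refine (hsep n hs hs' hne).ne_of_mem ?_ ?_ (rfl : x = x)
        · rw [Set.mul_singleton]; exact ⟨k n i * c, hmemVi, hx1.symm⟩
        · rw [Set.mul_singleton]; exact ⟨k n j * c', hmemVj, hx2.symm⟩
    have hcore := density_core m hpos hint hone hrei (hmeas n) n (k n) hdisj
    have hptwise : ∀ N, ∫ x in U * S n, Φ N x ∂m ≤ ∫ x in C * S n, Φ N x ∂m := by
      intro N
      apply integral_mono_measure
        (Measure.restrict_mono (Set.mul_subset_mul_right subset_closure) le_rfl)
      · exact ae_of_all _ fun x => hpos N x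
      · exact (hint N).restrict
    have hle1 : ∀ N, ∫ x in C * S n, Φ N x ∂m ≤ 1 := by
      intro N
      rw [← hone N]
      apply integral_mono_measure Measure.restrict_le_self
      · exact ae_of_all _ fun x => hpos N x
      · exact hint N
    constructor
    · calc upperDensReiter m Φ (U * S n)
          ≤ limsup (fun N => ∫ x in C * S n, Φ N x ∂m) atTop := by
            refine limsup_le_limsup (Eventually.of_forall hptwise) ?_ ?_
            · exact IsBoundedUnder.isCoboundedUnder_le
                ⟨0, eventually_map.mpr (Eventually.of_forall fun (N : ℕ) =>
                  integral_nonneg (fun x => hpos N x))⟩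
            · exact ⟨1, eventually_map.mpr (Eventually.of_forall hle1)⟩
        _ ≤ 1/(n+1) := hcore
    · refine le_limsup_of_frequently_le
        ((Eventually.of_forall (fun (N : ℕ) => integral_nonneg (fun x => hpos N x))).frequently) ?_
      exact ⟨1, eventually_map.mpr (Eventually.of_forall fun (N : ℕ) =>
        le_trans (hptwise N) (hle1 N))⟩
  -- conclusion
  refine ⟨S, hsub, hsyn, hdisc, ?_⟩
  have hub : ∀ n, upperBanachDens m (U * S n) ≤ 1/((n:ℝ)+1) := by
    intro n
    apply Real.sSup_le
    · rintro d ⟨Φ, hΦ, rfl⟩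
      exact (hdens n Φ hΦ).1
    · positivity
  have hlb : ∀ n, 0 ≤ upperBanachDens m (U * S n) := by
    intro n
    apply Real.sSup_nonneg
    rintro d ⟨Φ, hΦ, rfl⟩
    exact (hdens n Φ hΦ).2
  exact tendsto_of_tendsto_of_tendsto_of_le_of_le tendsto_const_nhds
    tendsto_one_div_add_atTop_nhds_zero_nat hlb hub
end
end
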